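/- arXiv:1104.1027 — 7 statements merged into one kernel-verified Lean document; each statement's English description precedes it below -/
import Mathlib

section
/- Suppose the sequence (x_n) satisfies the recursion x_n = Σ_{j=1}^{n-1} w_{n,j} x_{n-j} + r_n with w_{n,j} = a_j + b_j/n + c_{n,j} ≥ 0, conditions (r1)–(r3) hold, and (x_n) has infinitely many positive terms. Then there exists N such that x_n > 0 for every n ≥ N. -/
open AddSubmonoid in
lemma aux_finset_support (S : Set ℕ) (p : ℕ) (hp : p ∈ AddSubmonoid.closure S) :
    ∃ F : Finset ℕ, ↑F ⊆ S ∧ p ∈ AddSubmonoid.closure (↑F : Set ℕ) := by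
  induction hp using AddSubmonoid.closure_induction with
  | mem x hx => exact ⟨{x}, by simpa using hx, AddSubmonoid.subset_closure (by simp)⟩
  | zero => exact ⟨∅, by simp, zero_mem _⟩
  | add x y hx hy ihx ihy =>
    obtain ⟨F1, hF1, hx1⟩ := ihx
    obtain ⟨F2, hF2, hy2⟩ := ihy
    refine ⟨F1 ∪ F2, by push_cast; exact Set.union_subset hF1 hF2, ?_⟩
    exact add_mem (AddSubmonoid.closure_mono (by push_cast; exact Set.subset_union_left) hx1)
      (AddSubmonoid.closure_mono (by push_cast; exact Set.subset_union_right) hy2)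

lemma aux_bezout (S : Set ℕ) (hS : ∀ d : ℕ, (∀ s ∈ S, d ∣ s) → d = 1) :
    ∃ p q : ℕ, p ∈ AddSubmonoid.closure S ∧ q ∈ AddSubmonoid.closure S ∧ p = q + 1 := by
  set M := AddSubmonoid.closure S
  set Sz : Set ℤ := (fun n : ℕ => (n : ℤ)) '' S
  set H := AddSubgroup.closure Sz with hH
  obtain ⟨g, hg⟩ := Int.subgroup_cyclic H
  have hdvd : ∀ s ∈ S, g.natAbs ∣ s := by
    intro s hs
    have : (s : ℤ) ∈ H := AddSubgroup.subset_closure ⟨s, hs, rfl⟩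
    rw [hg, AddSubgroup.mem_closure_singleton] at this
    obtain ⟨n, hn⟩ := this
    have : g ∣ (s : ℤ) := ⟨n, by rw [← hn, smul_eq_mul, mul_comm]⟩
    exact Int.ofNat_dvd.mp (Int.natAbs_dvd.mpr this)
  have hg1 : g.natAbs = 1 := hS _ hdvd
  have h1H : (1 : ℤ) ∈ H := by
    rcases Int.natAbs_eq g with h | h
    · rw [hg1] at h; rw [hg]
      exact AddSubgroup.subset_closure (by simp [h])
    · rw [hg1] at h
      rw [hg]
      have h1 : (1 : ℤ) = -g := by rw [h]; ring
      rw [h1]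
      exact neg_mem (AddSubgroup.subset_closure rfl)
  -- the set of differences of elements of M is a subgroup containing Sz
  set T : AddSubgroup ℤ :=
    { carrier := {u : ℤ | ∃ p q : ℕ, p ∈ M ∧ q ∈ M ∧ u = (p : ℤ) - q}
      zero_mem' := ⟨0, 0, zero_mem _, zero_mem _, by simp⟩
      add_mem' := by
        rintro u v ⟨p1, q1, hp1, hq1, rfl⟩ ⟨p2, q2, hp2, hq2, rfl⟩
        exact ⟨p1 + p2, q1 + q2, add_mem hp1 hp2, add_mem hq1 hq2, by push_cast; ring⟩
      neg_mem' := by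
        rintro u ⟨p, q, hp, hq, rfl⟩
        exact ⟨q, p, hq, hp, by ring⟩ }
  have hHT : H ≤ T := by
    rw [hH]
    apply AddSubgroup.closure_le T |>.mpr
    rintro u ⟨s, hs, rfl⟩
    exact ⟨s, 0, AddSubmonoid.subset_closure hs, zero_mem _, by simp⟩
  obtain ⟨p, q, hp, hq, hpq⟩ := hHT h1H
  refine ⟨p, q, hp, hq, ?_⟩
  omega

lemma aux_semigroup (S : Set ℕ) (p q : ℕ) (hp : p ∈ AddSubmonoid.closure S)
    (hq : q ∈ AddSubmonoid.closure S) (hpq : p = q + 1) :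
    ∀ n : ℕ, q * q ≤ n → n ∈ AddSubmonoid.closure S := by
  intro n hn
  rcases Nat.eq_zero_or_pos q with h0 | hqpos
  · have hp1 : p = 1 := by omega
    have := nsmul_mem hp n
    rwa [hp1, smul_eq_mul, mul_one] at this
  · set t := n - q * q with ht
    set k := t / q with hk
    set r := t % q with hr
    have hrq : r < q := Nat.mod_lt _ hqpos
    set s := q - r with hs
    have hqs : q = r + s := by omega
    have hdm : q * k + r = t := Nat.div_add_mod t q
    have hnt : n = q * q + t := by omega
    have key : n = r * p + (s + k) * q := by
      have : r * p + (s + k) * q = (r + s) * q + q * k + r := by rw [hpq]; ring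
      rw [this, ← hqs]; omega
    rw [key]
    exact add_mem (by simpa [smul_eq_mul] using nsmul_mem hp r)
      (by simpa [smul_eq_mul] using nsmul_mem hq (s + k))



/-- Lemma 3.1 of the paper: under conditions (r1)–(r3), if the solution of the
renewal-like recursion has infinitely many positive terms, then it is
eventually positive. -/
theorem discrete_renewal_eventually_positive
    (a b r : ℕ → ℝ) (c : ℕ → ℕ → ℝ) (x : ℕ → ℝ) (w : ℕ → ℕ → ℝ)
    (hw : ∀ n j : ℕ, w n j = a j + b j / (n : ℝ) + c n j)
    (hwnn : ∀ n : ℕ, ∀ j ∈ Finset.Ico 1 n, 0 ≤ w n j)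
    (hrec : ∀ n : ℕ, 1 ≤ n → x n = (∑ j ∈ Finset.Ico 1 n, w n j * x (n - j)) + r n)
    -- (r1)
    (ha_nn : ∀ n : ℕ, 1 ≤ n → 0 ≤ a n)
    (hgcd : ∀ d : ℕ, (∀ n : ℕ, 1 ≤ n → 0 < a n → d ∣ n) → d = 1)
    -- (r2)
    (hr_nn : ∀ n : ℕ, 0 ≤ r n)
    (hr_pos : ∃ n : ℕ, 0 < r n)
    -- (r3)
    (z : ℝ) (hz : 0 < z)
    (haz : Summable fun n : ℕ => a (n + 1) * z ^ (n + 1))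
    (haz1 : 1 < ∑' n : ℕ, a (n + 1) * z ^ (n + 1))
    (hbz : Summable fun n : ℕ => |b (n + 1)| * z ^ (n + 1))
    (hcz : Summable fun n : ℕ => ∑ j ∈ Finset.Ico 1 n, |c n j| * z ^ j)
    (hrz : Summable fun n : ℕ => r (n + 1) * z ^ (n + 1))
    -- infinitely many positive terms
    (hx_inf : ∀ N : ℕ, ∃ n : ℕ, N ≤ n ∧ 0 < x n) :
    ∃ N : ℕ, ∀ n : ℕ, N ≤ n → 0 < x n := by
  classical
  -- nonnegativity of x on positive indices
  have hx_nn : ∀ n : ℕ, 1 ≤ n → 0 ≤ x n := by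
    intro n
    induction n using Nat.strong_induction_on with
    | _ n ih =>
      intro hn
      rw [hrec n hn]
      have hsum : 0 ≤ ∑ j ∈ Finset.Ico 1 n, w n j * x (n - j) := by
        apply Finset.sum_nonneg
        intro j hj
        have hj' := Finset.mem_Ico.mp hj
        exact mul_nonneg (hwnn n j hj) (ih (n - j) (by omega) (by omega))
      linarith [hr_nn n]
  -- one-step lower bound
  have hstep : ∀ m j : ℕ, 1 ≤ m → 1 ≤ j → w (m + j) j * x m ≤ x (m + j) := by
    intro m j hm hj
    rw [hrec (m + j) (by omega)]
    have hjmem : j ∈ Finset.Ico 1 (m + j) := Finset.mem_Ico.mpr ⟨hj, by omega⟩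
    have h1 : w (m + j) j * x (m + j - j) ≤
        ∑ i ∈ Finset.Ico 1 (m + j), w (m + j) i * x (m + j - i) := by
      apply Finset.single_le_sum (f := fun i => w (m + j) i * x (m + j - i))
      · intro i hi
        have hi' := Finset.mem_Ico.mp hi
        exact mul_nonneg (hwnn _ i hi) (hx_nn _ (by omega))
      · exact hjmem
    have h2 : m + j - j = m := by omega
    rw [h2] at h1
    linarith [hr_nn (m + j)]
  -- the support set of a
  set S : Set ℕ := {n | 1 ≤ n ∧ 0 < a n} with hSdef
  have hSgcd : ∀ d : ℕ, (∀ s ∈ S, d ∣ s) → d = 1 := by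
    intro d hd
    exact hgcd d fun n h1 h2 => hd n ⟨h1, h2⟩
  obtain ⟨p, q, hp, hq, hpq⟩ := aux_bezout S hSgcd
  obtain ⟨Fp, hFp, hpF⟩ := aux_finset_support S p hp
  obtain ⟨Fq, hFq, hqF⟩ := aux_finset_support S q hq
  set F : Finset ℕ := Fp ∪ Fq with hFdef
  have hF : (↑F : Set ℕ) ⊆ S := by
    rw [hFdef]; push_cast; exact Set.union_subset hFp hFq
  have hpF' : p ∈ AddSubmonoid.closure (↑F : Set ℕ) :=
    AddSubmonoid.closure_mono (by rw [hFdef]; push_cast; exact Set.subset_union_left) hpF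
  have hqF' : q ∈ AddSubmonoid.closure (↑F : Set ℕ) :=
    AddSubmonoid.closure_mono (by rw [hFdef]; push_cast; exact Set.subset_union_right) hqF
  have hsemi : ∀ n : ℕ, q * q ≤ n → n ∈ AddSubmonoid.closure (↑F : Set ℕ) :=
    aux_semigroup _ p q hpF' hqF' hpq
  -- eventual positivity of the weights along F
  have hwev : ∀ j : ℕ, j ∈ F → ∃ N : ℕ, ∀ n : ℕ, N ≤ n → 0 < w n j := by
    intro j hj
    have hjS : 1 ≤ j ∧ 0 < a j := hF hj
    have hε : (0 : ℝ) < a j / 3 := by linarith [hjS.2]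
    have hev1 : ∀ᶠ n : ℕ in Filter.atTop, |b j| / (n : ℝ) < a j / 3 :=
      Filter.Tendsto.eventually_lt_const hε (tendsto_const_div_atTop_nhds_zero_nat |b j|)
    have hεz : (0 : ℝ) < a j / 3 * z ^ j := by positivity
    have hev2 : ∀ᶠ n : ℕ in Filter.atTop,
        (∑ i ∈ Finset.Ico 1 n, |c n i| * z ^ i) < a j / 3 * z ^ j :=
      Filter.Tendsto.eventually_lt_const hεz hcz.tendsto_atTop_zero
    have hev3 : ∀ᶠ n : ℕ in Filter.atTop, j + 1 ≤ n := Filter.eventually_ge_atTop (j + 1)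
    have hall := (hev1.and hev2).and hev3
    rw [Filter.eventually_atTop] at hall
    obtain ⟨N, hN⟩ := hall
    refine ⟨N, fun n hn => ?_⟩
    obtain ⟨⟨hb, hc⟩, hjn⟩ := hN n hn
    have hcj : |c n j| * z ^ j ≤ ∑ i ∈ Finset.Ico 1 n, |c n i| * z ^ i := by
      apply Finset.single_le_sum (f := fun i => |c n i| * z ^ i)
      · intro i _; positivity
      · exact Finset.mem_Ico.mpr ⟨hjS.1, by omega⟩
    have hcj' : |c n j| < a j / 3 := by
      have hzj : (0 : ℝ) < z ^ j := by positivity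
      have : |c n j| * z ^ j < a j / 3 * z ^ j := lt_of_le_of_lt hcj hc
      exact lt_of_mul_lt_mul_right this (le_of_lt hzj)
    have habs : |b j / (n : ℝ)| = |b j| / (n : ℝ) := by
      rw [abs_div, Nat.abs_cast]
    have h1 : -(|b j| / (n : ℝ)) ≤ b j / (n : ℝ) := by
      rw [← habs]; exact neg_abs_le _
    have h2 : -|c n j| ≤ c n j := neg_abs_le _
    rw [hw n j]
    linarith [hjS.2]
  choose Nf hNf using hwev
  set N0 : ℕ := max 1 (F.attach.sup fun j => Nf j.1 j.2) with hN0def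
  -- propagation of positivity
  have hprop : ∀ k : ℕ, k ∈ AddSubmonoid.closure (↑F : Set ℕ) →
      ∀ m : ℕ, N0 ≤ m → 0 < x m → 0 < x (m + k) := by
    intro k hk
    induction hk using AddSubmonoid.closure_induction with
    | mem j hj =>
      intro m hm hxm
      have hjF : j ∈ F := hj
      have hjS : 1 ≤ j ∧ 0 < a j := hF hjF
      have hm1 : 1 ≤ m := le_trans (le_max_left _ _) hm
      have hNj : Nf j hjF ≤ m + j := by
        have h1 : Nf j hjF ≤ F.attach.sup fun j => Nf j.1 j.2 :=
          Finset.le_sup (f := fun j : {x // x ∈ F} => Nf j.1 j.2)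
            (Finset.mem_attach F ⟨j, hjF⟩)
        have h2 : (F.attach.sup fun j => Nf j.1 j.2) ≤ N0 := le_max_right _ _
        omega
      have hwpos : 0 < w (m + j) j := hNf j hjF (m + j) hNj
      exact lt_of_lt_of_le (mul_pos hwpos hxm) (hstep m j hm1 hjS.1)
    | zero => intro m _ hxm; simpa using hxm
    | add k1 k2 hk1 hk2 ih1 ih2 =>
      intro m hm hxm
      have h1 := ih1 m hm hxm
      have h2 := ih2 (m + k1) (by omega) h1
      rwa [add_assoc] at h2
  obtain ⟨m, hm, hxm⟩ := hx_inf N0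
  refine ⟨m + q * q, fun n hn => ?_⟩
  have hk : n - m ∈ AddSubmonoid.closure (↑F : Set ℕ) := hsemi (n - m) (by omega)
  have := hprop (n - m) hk m hm hxm
  rwa [Nat.add_sub_cancel' (by omega : m ≤ n)] at this
end

section
/- Assume the normalized conditions: (r1)–(r3) hold with Σ_{n=1}^∞ a_n = 1 and z > 1, and set γ = (Σ_{n=1}^∞ b_n)/(Σ_{n=1}^∞ n a_n). Then for every positive integer k, Σ_{n=k}^∞ | Σ_{j=1}^{n-k} ( w_{n,j} (1 − j/n)^γ − a_j ) | < ∞, where w_{n,j} = a_j + b_j/n + c_{n,j}. -/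
private lemma lemP (r : ℝ) (hr : 1 < r) (K : ℕ) :
    ∃ D : ℝ, 0 < D ∧ ∀ m : ℕ, (m : ℝ) ^ K ≤ D * r ^ m := by
  have hr0 : (0:ℝ) < r := lt_trans one_pos hr
  have hinv : ‖r⁻¹‖ < 1 := by
    rw [Real.norm_eq_abs, abs_of_pos (inv_pos.mpr hr0)]
    exact inv_lt_one_of_one_lt₀ hr
  have hs : Summable fun m : ℕ => (m : ℝ) ^ K * r⁻¹ ^ m :=
    summable_pow_mul_geometric_of_norm_lt_one K hinv
  have hnn : ∀ m : ℕ, 0 ≤ (m : ℝ) ^ K * r⁻¹ ^ m := fun m =>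
    mul_nonneg (pow_nonneg (Nat.cast_nonneg m) _) (pow_nonneg (by positivity) _)
  refine ⟨(∑' m : ℕ, (m : ℝ) ^ K * r⁻¹ ^ m) + 1, ?_, ?_⟩
  · have : 0 ≤ ∑' m : ℕ, (m : ℝ) ^ K * r⁻¹ ^ m := tsum_nonneg hnn
    linarith
  · intro m
    have h1 : (m : ℝ) ^ K * r⁻¹ ^ m ≤ ∑' m : ℕ, (m : ℝ) ^ K * r⁻¹ ^ m :=
      hs.le_tsum m (fun j _ => hnn j)
    have hrm : (0:ℝ) < r ^ m := pow_pos hr0 m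
    have : (m : ℝ) ^ K = ((m : ℝ) ^ K * r⁻¹ ^ m) * r ^ m := by
      rw [mul_assoc, ← mul_pow, inv_mul_cancel₀ (ne_of_gt hr0), one_pow, mul_one]
    rw [this]
    have h2 : ((m : ℝ) ^ K * r⁻¹ ^ m) * r ^ m ≤ (∑' m : ℕ, (m : ℝ) ^ K * r⁻¹ ^ m) * r ^ m :=
      mul_le_mul_of_nonneg_right h1 hrm.le
    nlinarith [(tsum_nonneg hnn : 0 ≤ ∑' m : ℕ, (m : ℝ) ^ K * r⁻¹ ^ m)]

set_option maxHeartbeats 2000000 in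
private lemma lemB (γ : ℝ) (z₁ : ℝ) (hz₁ : 1 < z₁) :
    ∃ C : ℝ, 0 < C ∧ ∀ n j : ℕ, 1 ≤ j → j < n →
      |(1 - (j:ℝ)/(n:ℝ)) ^ γ - 1 + γ * ((j:ℝ)/(n:ℝ))| ≤ C * ((j:ℝ)/(n:ℝ))^2 * z₁ ^ j := by
  obtain ⟨K, hγK⟩ : ∃ K : ℕ, |γ| ≤ (K : ℝ) := ⟨⌈|γ|⌉₊, Nat.le_ceil _⟩
  obtain ⟨M, hM2n, hMK⟩ : ∃ M : ℕ, 2 ≤ M ∧ 2 * (K : ℝ) + 2 ≤ (M : ℝ) := by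
    refine ⟨2 * (K + 1), by omega, by push_cast; ring_nf; linarith⟩
  obtain ⟨D, hD0, hD⟩ := lemP z₁ hz₁ K
  set A : ℝ := 4 * γ ^ 2 + 2 * |γ| with hA
  set B : ℝ := (2 + |γ|) * (M : ℝ) ^ K * D * (M : ℝ) ^ 2 with hB
  have hMpos : (0:ℝ) < (M : ℝ) := by positivity
  have hBnn : 0 ≤ B := by positivity
  have hAnn : 0 ≤ A := by positivity
  refine ⟨A + B + 1, by linarith, ?_⟩
  intro n j hj hjn
  have hnpos : 0 < n := lt_trans (Nat.lt_of_lt_of_le Nat.zero_lt_one hj) hjn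
  have hn0 : (0:ℝ) < (n:ℝ) := by exact_mod_cast hnpos
  have hj0 : (0:ℝ) < (j:ℝ) := by exact_mod_cast hj
  set u : ℝ := (j:ℝ)/(n:ℝ) with hu
  have hu0 : 0 < u := div_pos hj0 hn0
  have hu1 : u < 1 := (div_lt_one hn0).mpr (by exact_mod_cast hjn)
  have h1u : 0 < 1 - u := by linarith
  have hz₁j : (1:ℝ) ≤ z₁ ^ j := one_le_pow₀ hz₁.le
  by_cases hcase : M * j ≤ n
  · -- small u case
    have huM : u * (M:ℝ) ≤ 1 := by
      rw [hu, div_mul_eq_mul_div, div_le_one hn0]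
      calc (j:ℝ) * M = ((M * j : ℕ) : ℝ) := by push_cast; ring
        _ ≤ (n:ℝ) := by exact_mod_cast hcase
    have hM2 : (2:ℝ) ≤ (M:ℝ) := by
      exact_mod_cast hM2n
    have huhalf : u ≤ 1/2 := by nlinarith
    have hlog := Real.abs_log_sub_add_sum_range_le (x := u) (by rw [abs_of_pos hu0]; exact hu1) 1
    rw [abs_of_pos hu0] at hlog
    norm_num at hlog
    -- hlog : |u + Real.log (1 - u)| ≤ u ^ 2 / (1 - u)
    set L : ℝ := Real.log (1 - u) with hL
    have hLu : |u + L| ≤ 2 * u ^ 2 := by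
      refine hlog.trans ?_
      rw [div_le_iff₀ h1u]; nlinarith
    have hLabs : |L| ≤ 2 * u := by
      have h1 : |L| ≤ |u + L| + |(-u)| := by
        calc |L| = |(u + L) + (-u)| := by ring_nf
          _ ≤ |u + L| + |(-u)| := abs_add_le _ _
      rw [abs_neg, abs_of_pos hu0] at h1
      nlinarith
    set t : ℝ := γ * L with ht
    have htabs : |t| ≤ 2 * |γ| * u := by
      rw [ht, abs_mul]
      calc |γ| * |L| ≤ |γ| * (2 * u) := by
            exact mul_le_mul_of_nonneg_left hLabs (abs_nonneg _)
        _ = 2 * |γ| * u := by ring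
    have ht1 : |t| ≤ 1 := by
      have h1 : 2 * |γ| * u ≤ 2 * (K:ℝ) * (1/(M:ℝ)) := by
        have huM' : u ≤ 1/(M:ℝ) := by
          rw [le_div_iff₀ hMpos]; exact huM
        have := mul_le_mul (by linarith : 2 * |γ| ≤ 2 * (K:ℝ)) huM' hu0.le (by positivity)
        linarith
      have h2 : 2 * (K:ℝ) * (1/(M:ℝ)) ≤ 1 := by
        rw [mul_one_div, div_le_one hMpos]
        linarith
      linarith [htabs]
    have hrpow : (1 - u) ^ γ = Real.exp t := by
      rw [Real.rpow_def_of_pos h1u, ht, hL, mul_comm]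
    have hexp : |Real.exp t - 1 - t| ≤ t ^ 2 := Real.abs_exp_sub_one_sub_id_le ht1
    have key : |(1 - u) ^ γ - 1 + γ * u| ≤ A * u ^ 2 := by
      rw [hrpow]
      have hsplit : Real.exp t - 1 + γ * u = (Real.exp t - 1 - t) + γ * (L + u) := by
        rw [ht]; ring
      have h3 : |Real.exp t - 1 + γ * u| ≤ |Real.exp t - 1 - t| + |γ| * |L + u| := by
        rw [hsplit]
        calc _ ≤ |Real.exp t - 1 - t| + |γ * (L + u)| := abs_add_le _ _
          _ = _ := by rw [abs_mul]
      have h4 : |γ| * |L + u| ≤ |γ| * (2 * u^2) := by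
        refine mul_le_mul_of_nonneg_left ?_ (abs_nonneg _)
        rw [show L + u = u + L by ring]; exact hLu
      have h5 : t ^ 2 ≤ (2 * |γ| * u)^2 := by
        rw [← sq_abs t]; exact pow_le_pow_left₀ (abs_nonneg t) htabs 2
      calc |Real.exp t - 1 + γ * u| ≤ |Real.exp t - 1 - t| + |γ| * |L + u| := h3
        _ ≤ t ^ 2 + |γ| * (2 * u ^ 2) := add_le_add hexp h4
        _ ≤ (2 * |γ| * u) ^ 2 + |γ| * (2 * u ^ 2) := by linarith
        _ = A * u ^ 2 := by rw [hA, mul_pow, mul_pow, sq_abs]; ring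
    have hstep1 : A * u ^ 2 ≤ (A + B + 1) * u ^ 2 := mul_le_mul_of_nonneg_right (by linarith) (sq_nonneg u)
    have hstep2 : (A + B + 1) * u ^ 2 * 1 ≤ (A + B + 1) * u ^ 2 * z₁ ^ j :=
      mul_le_mul_of_nonneg_left hz₁j (by positivity)
    calc |(1 - u) ^ γ - 1 + γ * u| ≤ A * u ^ 2 := key
      _ ≤ (A + B + 1) * u ^ 2 * z₁ ^ j := by rw [mul_one] at hstep2; linarith
  · -- large u case
    push_neg at hcase
    have hnMj : (n:ℝ) < (M:ℝ) * (j:ℝ) := by exact_mod_cast hcase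
    have hMu : 1 < (M:ℝ) * u := by
      rw [hu, ← mul_div_assoc]
      exact (one_lt_div hn0).mpr hnMj
    have h1 : (1 - u) ^ γ ≤ (n:ℝ) ^ K := by
      have hnK : (1:ℝ) ≤ (n:ℝ) ^ K := one_le_pow₀ (by exact_mod_cast hnpos)
      rcases le_or_gt 0 γ with hγ0 | hγ0
      · exact le_trans (Real.rpow_le_one h1u.le (by linarith) hγ0) hnK
      · have hbase : (n:ℝ)⁻¹ ≤ 1 - u := by
          rw [hu]
          have hjn' : (j:ℝ) ≤ (n:ℝ) - 1 := by
            have : (j:ℕ) + 1 ≤ n := hjn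
            have := (Nat.cast_le (α := ℝ)).mpr this
            push_cast at this; linarith
          rw [inv_eq_one_div, div_le_iff₀ hn0, sub_mul, div_mul_cancel₀ _ (ne_of_gt hn0)]
          linarith
        calc (1-u)^γ ≤ ((n:ℝ)⁻¹)^γ := Real.rpow_le_rpow_of_nonpos (by positivity) hbase hγ0.le
          _ = (n:ℝ) ^ (-γ) := by rw [Real.inv_rpow hn0.le, ← Real.rpow_neg hn0.le]
          _ ≤ (n:ℝ) ^ ((K:ℝ)) := by
              apply Real.rpow_le_rpow_of_exponent_le (by exact_mod_cast hnpos)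
              rw [abs_of_neg hγ0] at hγK; linarith
          _ = (n:ℝ) ^ K := Real.rpow_natCast _ K
    have h2 : |(1 - u) ^ γ - 1 + γ * u| ≤ (2 + |γ|) * (n:ℝ) ^ K := by
      have hp : (0:ℝ) ≤ (1-u)^γ := Real.rpow_nonneg h1u.le γ
      have hnK : (1:ℝ) ≤ (n:ℝ) ^ K := one_le_pow₀ (by exact_mod_cast hnpos)
      have habs : |(1 - u) ^ γ - 1 + γ * u| ≤ (1-u)^γ + 1 + |γ| * u := by
        have e1 : |(1-u)^γ - 1 + γ*u| ≤ |(1-u)^γ - 1| + |γ*u| := abs_add_le _ _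
        have e2 : |(1-u)^γ - 1| ≤ |(1-u)^γ| + |(1:ℝ)| := abs_sub _ _
        rw [abs_of_nonneg hp, abs_one] at e2
        rw [abs_mul, abs_of_pos hu0] at e1
        linarith
      have hγu : |γ| * u ≤ |γ| * 1 := mul_le_mul_of_nonneg_left hu1.le (abs_nonneg γ)
      rw [mul_one] at hγu
      have hfin : (1-u)^γ + 1 + |γ| ≤ (2 + |γ|) * (n:ℝ) ^ K := by
        have e3 : (1:ℝ) * 1 ≤ (1 + |γ|) * (n:ℝ)^K :=
          mul_le_mul (by linarith [abs_nonneg γ]) hnK zero_le_one (by linarith [abs_nonneg γ])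
        rw [mul_one] at e3
        have e4 : (1 + |γ|) * 1 ≤ (1 + |γ|) * (n:ℝ)^K :=
          mul_le_mul_of_nonneg_left hnK (by linarith [abs_nonneg γ])
        rw [mul_one] at e4
        calc (1-u)^γ + 1 + |γ| ≤ (n:ℝ)^K + (1 + |γ|) := by linarith
          _ ≤ (n:ℝ)^K + (1 + |γ|) * (n:ℝ)^K := by linarith
          _ = (2 + |γ|) * (n:ℝ)^K := by ring
      linarith
    have h3 : (n:ℝ) ^ K ≤ (M:ℝ)^K * (D * z₁ ^ j) := by
      have hn_le : (n:ℝ) ≤ (M:ℝ) * j := by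
        calc (n:ℝ) ≤ ((M * j : ℕ) : ℝ) := by exact_mod_cast hcase.le
          _ = (M:ℝ) * j := by push_cast; ring
      calc (n:ℝ)^K ≤ ((M:ℝ) * j)^K := pow_le_pow_left₀ hn0.le hn_le K
        _ = (M:ℝ)^K * (j:ℝ)^K := mul_pow _ _ _
        _ ≤ (M:ℝ)^K * (D * z₁ ^ j) := mul_le_mul_of_nonneg_left (hD j) (by positivity)
    have h4 : 1 ≤ (M:ℝ)^2 * u^2 := by nlinarith
    calc |(1 - u) ^ γ - 1 + γ * u| ≤ (2 + |γ|) * ((M:ℝ)^K * (D * z₁ ^ j)) := by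
          refine h2.trans ?_
          exact mul_le_mul_of_nonneg_left h3 (by positivity)
      _ = B * z₁ ^ j / (M:ℝ)^2 := by rw [hB]; field_simp
      _ ≤ B * z₁ ^ j / (M:ℝ)^2 * ((M:ℝ)^2 * u^2) := by
          have hnn : 0 ≤ B * z₁ ^ j / (M:ℝ)^2 := by positivity
          have := mul_le_mul_of_nonneg_left h4 hnn
          rw [mul_one] at this; exact this
      _ = B * u^2 * z₁^j := by field_simp
      _ ≤ (A + B + 1) * u ^ 2 * z₁ ^ j := by
          have hnn2 : (0:ℝ) ≤ u^2 * z₁^j := by positivity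
          have h5 : B * (u^2 * z₁^j) ≤ (A + B + 1) * (u^2 * z₁^j) :=
            mul_le_mul_of_nonneg_right (by linarith) hnn2
          calc B * u^2 * z₁^j = B * (u^2 * z₁^j) := by ring
            _ ≤ (A + B + 1) * (u^2 * z₁^j) := h5
            _ = (A + B + 1) * u^2 * z₁^j := by ring


set_option maxHeartbeats 1000000 in
private lemma tail_bound (f : ℕ → ℝ) (z₁ : ℝ) (hz₁ : 1 < z₁)
    (hG : Summable (fun i => |f i| * z₁ ^ (i + 1)))
    (hf0 : ∑' i, f i = 0) (m : ℕ) :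
    |∑ i ∈ Finset.range m, f i| ≤ (∑' i, |f i| * z₁ ^ (i + 1)) * (z₁⁻¹) ^ (m + 1) := by
  have hz₁0 : (0:ℝ) < z₁ := lt_trans one_pos hz₁
  have hGnn : ∀ i, 0 ≤ |f i| * z₁ ^ (i + 1) := fun i => mul_nonneg (abs_nonneg _) (pow_nonneg hz₁0.le _)
  have habs : Summable (fun i => |f i|) := by
    refine Summable.of_nonneg_of_le (fun i => abs_nonneg _) (fun i => ?_) hG
    exact le_mul_of_one_le_right (abs_nonneg _) (one_le_pow₀ hz₁.le)
  have hfs : Summable f := habs.of_abs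
  have hkey : ∑ i ∈ Finset.range m, f i = -∑' i, f (i + m) := by
    have := hfs.sum_add_tsum_nat_add m
    rw [hf0] at this; linarith
  rw [hkey, abs_neg]
  have habs_shift : Summable (fun i => |f (i + m)|) := (summable_nat_add_iff m).mpr habs
  have hG_shift : Summable (fun i => |f (i + m)| * z₁ ^ (i + m + 1)) := (summable_nat_add_iff m).mpr hG
  have h1 : |∑' i, f (i + m)| ≤ ∑' i, |f (i + m)| := by
    simpa using norm_tsum_le_tsum_norm (f := fun i => f (i + m)) (by simpa using habs_shift)
  have h2 : ∀ i, |f (i + m)| ≤ (|f (i + m)| * z₁ ^ (i + m + 1)) * (z₁⁻¹) ^ (m + 1) := by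
    intro i
    have hpow : z₁ ^ (i + m + 1) * (z₁⁻¹) ^ (m + 1) = z₁ ^ i := by
      rw [inv_pow, show i + m + 1 = i + (m + 1) by ring, pow_add]
      field_simp
    calc |f (i + m)| = |f (i + m)| * 1 := (mul_one _).symm
      _ ≤ |f (i + m)| * z₁ ^ i := by
          exact mul_le_mul_of_nonneg_left (one_le_pow₀ hz₁.le) (abs_nonneg _)
      _ = (|f (i + m)| * z₁ ^ (i + m + 1)) * (z₁⁻¹) ^ (m + 1) := by rw [mul_assoc, hpow]
  have h3 : ∑' i, |f (i + m)| ≤ ∑' i, (|f (i + m)| * z₁ ^ (i + m + 1)) * (z₁⁻¹) ^ (m + 1) :=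
    Summable.tsum_le_tsum h2 habs_shift (hG_shift.mul_right _)
  have h4 : ∑' i, (|f (i + m)| * z₁ ^ (i + m + 1)) * (z₁⁻¹) ^ (m + 1)
      = (∑' i, |f (i + m)| * z₁ ^ (i + m + 1)) * (z₁⁻¹) ^ (m + 1) := tsum_mul_right
  have h5 : ∑' i, |f (i + m)| * z₁ ^ (i + m + 1) ≤ ∑' i, |f i| * z₁ ^ (i + 1) := by
    have := hG.sum_add_tsum_nat_add m
    have hsumnn : 0 ≤ ∑ i ∈ Finset.range m, |f i| * z₁ ^ (i + 1) :=
      Finset.sum_nonneg fun i _ => hGnn i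
    linarith
  have h6 : (0:ℝ) ≤ (z₁⁻¹) ^ (m + 1) := pow_nonneg (by positivity) _
  calc |∑' i, f (i + m)| ≤ ∑' i, |f (i + m)| := h1
    _ ≤ (∑' i, |f (i + m)| * z₁ ^ (i + m + 1)) * (z₁⁻¹) ^ (m + 1) := by rw [← h4]; exact h3
    _ ≤ (∑' i, |f i| * z₁ ^ (i + 1)) * (z₁⁻¹) ^ (m + 1) := mul_le_mul_of_nonneg_right h5 h6

set_option maxHeartbeats 3200000 in
/-- Lemma 3.2 of the paper (normalized case `∑ a_n = 1`, `z > 1`):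
for every positive integer `k`,
`∑_{n=k}^∞ | ∑_{j=1}^{n-k} ( w n j * (1 - j/n)^γ - a j ) | < ∞`. -/
theorem discrete_renewal_summable_error
    (a b : ℕ → ℝ) (c : ℕ → ℕ → ℝ) (w : ℕ → ℕ → ℝ)
    (hw : ∀ n j : ℕ, w n j = a j + b j / (n : ℝ) + c n j)
    (hwnn : ∀ n : ℕ, ∀ j ∈ Finset.Ico 1 n, 0 ≤ w n j)
    -- (r1), normalized
    (ha_nn : ∀ n : ℕ, 1 ≤ n → 0 ≤ a n)
    (hgcd : ∀ d : ℕ, (∀ n : ℕ, 1 ≤ n → 0 < a n → d ∣ n) → d = 1)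
    (ha_one : ∑' n : ℕ, a (n + 1) = 1)
    -- (r3), normalized with z > 1
    (z : ℝ) (hz : 1 < z)
    (haz : Summable fun n : ℕ => a (n + 1) * z ^ (n + 1))
    (hbz : Summable fun n : ℕ => |b (n + 1)| * z ^ (n + 1))
    (hcz : Summable fun n : ℕ => ∑ j ∈ Finset.Ico 1 n, |c n j| * z ^ j)
    (γ : ℝ)
    (hγ : γ = (∑' n : ℕ, b (n + 1)) / (∑' n : ℕ, ((n : ℝ) + 1) * a (n + 1))) :
    ∀ k : ℕ, 1 ≤ k →
      Summable (fun n : ℕ =>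
        |∑ j ∈ Finset.Ico 1 (n - k + 1),
          (w n j * ((1 : ℝ) - (j : ℝ) / (n : ℝ)) ^ γ - a j)|) := by
  intro k hk
  have hz0 : (0:ℝ) < z := by linarith
  set z₁ : ℝ := (1 + z) / 2 with hz₁def
  have hz₁ : 1 < z₁ := by rw [hz₁def]; linarith
  have hz₁z : z₁ < z := by rw [hz₁def]; linarith
  have hz₁0 : (0:ℝ) < z₁ := by linarith
  obtain ⟨C, hC0, hC⟩ := lemB γ z₁ hz₁
  have hzz₁ : 1 < z / z₁ := (one_lt_div hz₁0).mpr hz₁z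
  obtain ⟨D, hD0, hD⟩ := lemP (z / z₁) hzz₁ 2
  have hdivmul : ∀ j : ℕ, (z/z₁)^j * z₁^j = z^j := by
    intro j; rw [div_pow, div_mul_cancel₀]
    exact pow_ne_zero _ (ne_of_gt hz₁0)
  have hpow2 : ∀ j : ℕ, (j:ℝ)^2 * z₁ ^ j ≤ D * z ^ j := by
    intro j
    calc (j:ℝ)^2 * z₁^j ≤ (D * (z/z₁)^j) * z₁^j :=
          mul_le_mul_of_nonneg_right (hD j) (pow_nonneg hz₁0.le j)
      _ = D * ((z/z₁)^j * z₁^j) := by ring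
      _ = D * z^j := by rw [hdivmul]
  have hz₁z_pow : ∀ j : ℕ, z₁ ^ j ≤ z ^ j := fun j => pow_le_pow_left₀ hz₁0.le hz₁z.le j
  have hz₁pow1 : ∀ j : ℕ, (1:ℝ) ≤ z₁ ^ j := fun j => one_le_pow₀ hz₁.le
  -- basic summability
  have hann : ∀ i : ℕ, (0:ℝ) ≤ a (i+1) := fun i => ha_nn _ (by omega)
  have haznn : ∀ i : ℕ, (0:ℝ) ≤ a (i+1) * z^(i+1) :=
    fun i => mul_nonneg (hann i) (pow_nonneg hz0.le _)
  have hbznn : ∀ i : ℕ, (0:ℝ) ≤ |b (i+1)| * z^(i+1) :=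
    fun i => mul_nonneg (abs_nonneg _) (pow_nonneg hz0.le _)
  obtain ⟨D₁, hD₁0, hD₁⟩ := lemP (z / z₁) hzz₁ 1
  have haTz₁ : Summable fun i : ℕ => ((i:ℝ)+1) * a (i+1) * z₁^(i+1) := by
    refine Summable.of_nonneg_of_le (fun i => ?_) (fun i => ?_) (haz.mul_left D₁)
    · exact mul_nonneg (mul_nonneg (by positivity) (hann i)) (pow_nonneg hz₁0.le _)
    · have h1 : ((i:ℝ)+1) * z₁^(i+1) ≤ D₁ * z^(i+1) := by
        have h0 := hD₁ (i+1)
        rw [pow_one] at h0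
        calc ((i:ℝ)+1) * z₁^(i+1) = (((i+1:ℕ)):ℝ) * z₁^(i+1) := by push_cast; ring
          _ ≤ (D₁ * (z/z₁)^(i+1)) * z₁^(i+1) :=
              mul_le_mul_of_nonneg_right h0 (pow_nonneg hz₁0.le _)
          _ = D₁ * ((z/z₁)^(i+1) * z₁^(i+1)) := by ring
          _ = D₁ * z^(i+1) := by rw [hdivmul]
      calc ((i:ℝ)+1) * a (i+1) * z₁^(i+1) = (((i:ℝ)+1) * z₁^(i+1)) * a (i+1) := by ring
        _ ≤ (D₁ * z^(i+1)) * a (i+1) := mul_le_mul_of_nonneg_right h1 (hann i)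
        _ = D₁ * (a (i+1) * z^(i+1)) := by ring
  have hsA : Summable fun i : ℕ => ((i:ℝ)+1) * a (i+1) := by
    refine Summable.of_nonneg_of_le (fun i => mul_nonneg (by positivity) (hann i))
      (fun i => ?_) haTz₁
    exact le_mul_of_one_le_right (mul_nonneg (by positivity) (hann i)) (hz₁pow1 (i+1))
  have hsa1 : Summable fun i : ℕ => a (i+1) := by
    refine Summable.of_nonneg_of_le hann (fun i => ?_) haz
    exact le_mul_of_one_le_right (hann i) (one_le_pow₀ hz.le)
  have hbz₁ : Summable fun i : ℕ => |b (i+1)| * z₁^(i+1) := by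
    refine Summable.of_nonneg_of_le
      (fun i => mul_nonneg (abs_nonneg _) (pow_nonneg hz₁0.le _)) (fun i => ?_) hbz
    exact mul_le_mul_of_nonneg_left (hz₁z_pow (i+1)) (abs_nonneg _)
  have hsb1 : Summable fun i : ℕ => b (i+1) := by
    apply Summable.of_abs
    refine Summable.of_nonneg_of_le (fun i => abs_nonneg _) (fun i => ?_) hbz₁
    exact le_mul_of_one_le_right (abs_nonneg _) (hz₁pow1 (i+1))
  -- γ identity
  set TA : ℝ := ∑' i : ℕ, ((i:ℝ)+1) * a (i+1) with hTAdef
  have hTA1 : (1:ℝ) ≤ TA := by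
    have h := Summable.tsum_le_tsum (f := fun i : ℕ => a (i+1))
      (g := fun i : ℕ => ((i:ℝ)+1) * a (i+1)) (fun i => by
        show a (i+1) ≤ ((i:ℝ)+1) * a (i+1)
        have h1 : (0:ℝ) ≤ (i:ℝ) * a (i+1) := mul_nonneg (Nat.cast_nonneg i) (hann i)
        linarith) hsa1 hsA
    rw [ha_one] at h
    rw [hTAdef]
    exact h
  have hγTA : γ * TA = ∑' i : ℕ, b (i+1) := by
    rw [hγ]
    exact div_mul_cancel₀ _ (by linarith : TA ≠ 0)
  set f : ℕ → ℝ := fun i => b (i+1) - γ * (((i:ℝ)+1) * a (i+1)) with hfdef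
  have hf0 : ∑' i, f i = 0 := by
    rw [hfdef]
    rw [Summable.tsum_sub hsb1 (hsA.mul_left γ), tsum_mul_left, ← hTAdef, ← hγTA]
    ring
  have hGf : Summable fun i => |f i| * z₁ ^ (i + 1) := by
    refine Summable.of_nonneg_of_le
      (fun i => mul_nonneg (abs_nonneg _) (pow_nonneg hz₁0.le _)) (fun i => ?_)
      (hbz₁.add (haTz₁.mul_left |γ|))
    have h1 : |f i| ≤ |b (i+1)| + |γ| * (((i:ℝ)+1) * a (i+1)) := by
      rw [hfdef]
      calc |b (i+1) - γ * (((i:ℝ)+1) * a (i+1))|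
          ≤ |b (i+1)| + |γ * (((i:ℝ)+1) * a (i+1))| := abs_sub _ _
        _ = |b (i+1)| + |γ| * (((i:ℝ)+1) * a (i+1)) := by
            rw [abs_mul, abs_of_nonneg (mul_nonneg (by positivity) (hann i))]
    calc |f i| * z₁ ^ (i+1)
        ≤ (|b (i+1)| + |γ| * (((i:ℝ)+1) * a (i+1))) * z₁ ^ (i+1) :=
          mul_le_mul_of_nonneg_right h1 (pow_nonneg hz₁0.le _)
      _ = |b (i+1)| * z₁^(i+1) + |γ| * (((i:ℝ)+1) * a (i+1) * z₁^(i+1)) := by ring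
  -- constants
  set Taz : ℝ := ∑' i : ℕ, a (i+1) * z^(i+1) with hTazdef
  set Tbz : ℝ := ∑' i : ℕ, |b (i+1)| * z^(i+1) with hTbzdef
  set K₄ : ℝ := ∑' i, |f i| * z₁ ^ (i + 1) with hK₄def
  have hTaznn : 0 ≤ Taz := tsum_nonneg haznn
  have hTbznn : 0 ≤ Tbz := tsum_nonneg hbznn
  have hK₄nn : 0 ≤ K₄ := tsum_nonneg fun i =>
    mul_nonneg (abs_nonneg _) (pow_nonneg hz₁0.le _)
  set c₁ : ℝ := C*D*Taz + (C+|γ|)*D*Tbz with hc₁def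
  set c₂ : ℝ := C + 1 + |γ| with hc₂def
  have hc₁nn : 0 ≤ c₁ := by rw [hc₁def]; positivity
  have hc₂nn : 0 ≤ c₂ := by rw [hc₂def]; positivity
  -- majorant
  set M : ℕ → ℝ := fun n =>
    c₁ / (n:ℝ)^2 + c₂ * (∑ j ∈ Finset.Ico 1 n, |c n j| * z ^ j)
      + K₄ * (z₁⁻¹) ^ (n - k + 1) with hMdef
  have hgnn : ∀ n : ℕ, 0 ≤ ∑ j ∈ Finset.Ico 1 n, |c n j| * z ^ j := fun n =>
    Finset.sum_nonneg fun j _ => mul_nonneg (abs_nonneg _) (pow_nonneg hz0.le _)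
  have hMnn : ∀ n, 0 ≤ M n := by
    intro n
    rw [hMdef]
    have h1 : (0:ℝ) ≤ (z₁⁻¹) ^ (n - k + 1) := by positivity
    have h2 := hgnn n
    have h3 : (0:ℝ) ≤ c₁ / (n:ℝ)^2 := by positivity
    have h4 : (0:ℝ) ≤ c₂ * (∑ j ∈ Finset.Ico 1 n, |c n j| * z ^ j) := mul_nonneg hc₂nn h2
    have h5 : (0:ℝ) ≤ K₄ * (z₁⁻¹) ^ (n - k + 1) := mul_nonneg hK₄nn h1
    exact add_nonneg (add_nonneg h3 h4) h5
  have hMsum : Summable M := by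
    rw [hMdef]
    refine Summable.add (Summable.add ?_ ?_) ?_
    · have h1 : Summable fun n : ℕ => 1/(n:ℝ)^2 :=
        Real.summable_one_div_nat_pow.mpr one_lt_two
      simpa [mul_one_div, div_eq_mul_inv] using h1.mul_left c₁
    · exact hcz.mul_left c₂
    · have hgeom : Summable fun n : ℕ => (z₁⁻¹) ^ (n+1) := by
        apply (summable_nat_add_iff 1).mpr
        exact summable_geometric_of_lt_one (by positivity) (inv_lt_one_of_one_lt₀ hz₁)
      have h2 : Summable fun n : ℕ => (z₁⁻¹) ^ ((n + k) - k + 1) := by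
        simpa [Nat.add_sub_cancel] using hgeom
      exact ((summable_nat_add_iff k).mp h2).mul_left K₄
  refine Summable.of_nonneg_of_le (fun n => abs_nonneg _) (fun n => ?_) hMsum
  by_cases hnk : n - k = 0
  · rw [hnk]
    simp only [Finset.Ico_self, Finset.sum_empty, abs_zero]
    exact hMnn n
  have hkn : k < n := by omega
  have hn1 : 1 ≤ n := by omega
  have hn0 : (0:ℝ) < (n:ℝ) := by exact_mod_cast hn1
  have hn0' : (n:ℝ) ≠ 0 := ne_of_gt hn0
  set m : ℕ := n - k with hmdef
  have hjmem : ∀ j ∈ Finset.Ico 1 (m+1), 1 ≤ j ∧ j < n := by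
    intro j hj
    rw [Finset.mem_Ico] at hj
    omega
  -- rewrite the sum
  have hterm : ∀ j ∈ Finset.Ico 1 (m+1),
      w n j * ((1:ℝ) - (j:ℝ)/(n:ℝ))^γ - a j =
      (a j * (((1:ℝ) - (j:ℝ)/(n:ℝ))^γ - 1 + γ*((j:ℝ)/(n:ℝ)))
        + (b j / (n:ℝ)) * (((1:ℝ) - (j:ℝ)/(n:ℝ))^γ - 1)
        + c n j * ((1:ℝ) - (j:ℝ)/(n:ℝ))^γ)
      + (b j - γ * ((j:ℝ) * a j)) / (n:ℝ) := by
    intro j hj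
    rw [hw n j]
    field_simp
    ring
  rw [Finset.sum_congr rfl hterm, Finset.sum_add_distrib, ← Finset.sum_div]
  refine le_trans (abs_add_le _ _) ?_
  rw [abs_div, abs_of_pos hn0]
  refine le_trans (add_le_add_left (Finset.abs_sum_le_sum_abs _ _) _) ?_
  -- pointwise bound on the main sum
  have hE : ∀ j ∈ Finset.Ico 1 (m+1),
      |a j * (((1:ℝ) - (j:ℝ)/(n:ℝ))^γ - 1 + γ*((j:ℝ)/(n:ℝ)))
        + (b j / (n:ℝ)) * (((1:ℝ) - (j:ℝ)/(n:ℝ))^γ - 1)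
        + c n j * ((1:ℝ) - (j:ℝ)/(n:ℝ))^γ|
      ≤ C*D*(a j * z^j)/(n:ℝ)^2 + (C+|γ|)*D*(|b j| * z^j)/(n:ℝ)^2
        + c₂*(|c n j| * z^j) := by
    intro j hj
    obtain ⟨hj1, hjn⟩ := hjmem j hj
    have hj0 : (0:ℝ) < (j:ℝ) := by exact_mod_cast hj1
    have hj1' : (1:ℝ) ≤ (j:ℝ) := by exact_mod_cast hj1
    set u : ℝ := (j:ℝ)/(n:ℝ) with hudef
    have hu0 : 0 < u := div_pos hj0 hn0
    have hu1 : u < 1 := (div_lt_one hn0).mpr (by exact_mod_cast hjn)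
    have h1u : (0:ℝ) ≤ 1 - u := by linarith
    set x : ℝ := ((1:ℝ) - u)^γ with hxdef
    have hxnn : 0 ≤ x := Real.rpow_nonneg h1u γ
    have hR : |x - 1 + γ*u| ≤ C * u^2 * z₁^j := by
      have h0 := hC n j hj1 hjn
      rw [← hudef, ← hxdef] at h0
      exact h0
    have hanj : 0 ≤ a j := ha_nn j hj1
    have htri2 : |a j * (x - 1 + γ*u) + (b j/(n:ℝ))*(x - 1) + c n j * x|
        ≤ a j * |x - 1 + γ*u| + (|b j|/(n:ℝ))*|x - 1| + |c n j| * x := by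
      have e1 := abs_add_le (a j * (x - 1 + γ*u) + (b j/(n:ℝ))*(x - 1)) (c n j * x)
      have e2 := abs_add_le (a j * (x - 1 + γ*u)) ((b j/(n:ℝ))*(x - 1))
      rw [abs_mul (c n j) x, abs_of_nonneg hxnn] at e1
      rw [abs_mul (a j), abs_of_nonneg hanj, abs_mul (b j/(n:ℝ)), abs_div,
        abs_of_pos hn0] at e2
      linarith
    refine le_trans htri2 ?_
    have hu2 : u^2 = (j:ℝ)^2/(n:ℝ)^2 := by rw [hudef, div_pow]
    -- piece (i)
    have hi : a j * |x - 1 + γ*u| ≤ C*D*(a j * z^j)/(n:ℝ)^2 := by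
      calc a j * |x - 1 + γ*u| ≤ a j * (C * u^2 * z₁^j) :=
            mul_le_mul_of_nonneg_left hR hanj
        _ = C * (a j * ((j:ℝ)^2 * z₁^j)) / (n:ℝ)^2 := by rw [hu2]; field_simp
        _ ≤ C * (a j * (D * z^j)) / (n:ℝ)^2 := by
            gcongr C * ?_ / _
            exact mul_le_mul_of_nonneg_left (hpow2 j) hanj
        _ = C*D*(a j * z^j)/(n:ℝ)^2 := by ring
    -- piece (ii)
    have hx1 : |x - 1| ≤ (C+|γ|) * u * z₁^j := by
      have e1 : |x - 1| ≤ |x - 1 + γ*u| + |γ| * u := by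
        calc |x - 1| = |(x - 1 + γ*u) - γ*u| := by ring_nf
          _ ≤ |x - 1 + γ*u| + |γ*u| := abs_sub _ _
          _ = |x - 1 + γ*u| + |γ| * u := by rw [abs_mul, abs_of_pos hu0]
      have e2 : C * u^2 * z₁^j ≤ C * u * z₁^j := by
        have h' : u^2 ≤ u := by nlinarith
        gcongr
      have e3 : |γ| * u ≤ |γ| * u * z₁^j :=
        le_mul_of_one_le_right (mul_nonneg (abs_nonneg _) hu0.le) (hz₁pow1 j)
      calc |x - 1| ≤ |x - 1 + γ*u| + |γ| * u := e1
        _ ≤ C*u^2*z₁^j + |γ| * u := by linarith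
        _ ≤ C*u*z₁^j + |γ| * u * z₁^j := by linarith
        _ = (C+|γ|)*u*z₁^j := by ring
    have hii : (|b j|/(n:ℝ))*|x - 1| ≤ (C+|γ|)*D*(|b j| * z^j)/(n:ℝ)^2 := by
      have h3 : (j:ℝ)*z₁^j ≤ D*z^j := by
        have h' : (j:ℝ) ≤ (j:ℝ)^2 := by nlinarith
        calc (j:ℝ)*z₁^j ≤ (j:ℝ)^2*z₁^j :=
              mul_le_mul_of_nonneg_right h' (pow_nonneg hz₁0.le j)
          _ ≤ D*z^j := hpow2 j
      calc (|b j|/(n:ℝ))*|x - 1| ≤ (|b j|/(n:ℝ))*((C+|γ|)*u*z₁^j) := by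
            exact mul_le_mul_of_nonneg_left hx1 (by positivity)
        _ = (C+|γ|)*(|b j| * ((j:ℝ)*z₁^j))/(n:ℝ)^2 := by rw [hudef]; field_simp
        _ ≤ (C+|γ|)*(|b j| * (D*z^j))/(n:ℝ)^2 := by
            gcongr (C+|γ|) * ?_ / _
            exact mul_le_mul_of_nonneg_left h3 (abs_nonneg _)
        _ = (C+|γ|)*D*(|b j| * z^j)/(n:ℝ)^2 := by ring
    -- piece (iii)
    have hiii : |c n j| * x ≤ c₂*(|c n j| * z^j) := by
      have hxle : x ≤ c₂ * z^j := by
        have e1 : x ≤ |x - 1 + γ*u| + |1 - γ*u| := by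
          calc x = (x - 1 + γ*u) + (1 - γ*u) := by ring
            _ ≤ |x - 1 + γ*u| + |1 - γ*u| := add_le_add (le_abs_self _) (le_abs_self _)
        have e2 : |1 - γ*u| ≤ 1 + |γ| := by
          calc |1 - γ*u| ≤ |(1:ℝ)| + |γ*u| := abs_sub _ _
            _ = 1 + |γ| * u := by rw [abs_one, abs_mul, abs_of_pos hu0]
            _ ≤ 1 + |γ| := by nlinarith [abs_nonneg γ]
        have e3 : C*u^2*z₁^j ≤ C*z₁^j := by
          have h' : u^2 ≤ 1 := by nlinarith
          calc C*u^2*z₁^j ≤ C*1*z₁^j := by gcongr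
            _ = C*z₁^j := by ring
        have e4 : (1:ℝ) + |γ| ≤ (1+|γ|)*z₁^j :=
          le_mul_of_one_le_right (by positivity) (hz₁pow1 j)
        calc x ≤ C*u^2*z₁^j + (1 + |γ|) := by linarith
          _ ≤ C*z₁^j + (1+|γ|)*z₁^j := by linarith
          _ = c₂*z₁^j := by rw [hc₂def]; ring
          _ ≤ c₂*z^j := mul_le_mul_of_nonneg_left (hz₁z_pow j) hc₂nn
      calc |c n j| * x ≤ |c n j| * (c₂*z^j) :=
            mul_le_mul_of_nonneg_left hxle (abs_nonneg _)
        _ = c₂*(|c n j| * z^j) := by ring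
    exact add_le_add (add_le_add hi hii) hiii
  have hsum1 := Finset.sum_le_sum hE
  have hsplit : ∑ j ∈ Finset.Ico 1 (m+1),
      (C*D*(a j * z^j)/(n:ℝ)^2 + (C+|γ|)*D*(|b j| * z^j)/(n:ℝ)^2 + c₂*(|c n j| * z^j))
      = C*D*(∑ j ∈ Finset.Ico 1 (m+1), a j * z^j)/(n:ℝ)^2
        + (C+|γ|)*D*(∑ j ∈ Finset.Ico 1 (m+1), |b j| * z^j)/(n:ℝ)^2
        + c₂*(∑ j ∈ Finset.Ico 1 (m+1), |c n j| * z^j) := by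
    rw [Finset.sum_add_distrib, Finset.sum_add_distrib, ← Finset.sum_div, ← Finset.sum_div,
      ← Finset.mul_sum, ← Finset.mul_sum, ← Finset.mul_sum]
  -- finite-sum comparisons with the tsums
  have hA_le : ∑ j ∈ Finset.Ico 1 (m+1), a j * z^j ≤ Taz := by
    rw [Finset.sum_Ico_eq_sum_range, Nat.add_sub_cancel]
    rw [show (∑ i ∈ Finset.range m, a (1+i) * z^(1+i))
        = ∑ i ∈ Finset.range m, a (i+1) * z^(i+1) from
      Finset.sum_congr rfl (fun i _ => by rw [add_comm 1 i])]
    exact Summable.sum_le_tsum _ (fun i _ => haznn i) haz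
  have hB_le : ∑ j ∈ Finset.Ico 1 (m+1), |b j| * z^j ≤ Tbz := by
    rw [Finset.sum_Ico_eq_sum_range, Nat.add_sub_cancel]
    rw [show (∑ i ∈ Finset.range m, |b (1+i)| * z^(1+i))
        = ∑ i ∈ Finset.range m, |b (i+1)| * z^(i+1) from
      Finset.sum_congr rfl (fun i _ => by rw [add_comm 1 i])]
    exact Summable.sum_le_tsum _ (fun i _ => hbznn i) hbz
  have hC_le : ∑ j ∈ Finset.Ico 1 (m+1), |c n j| * z^j
      ≤ ∑ j ∈ Finset.Ico 1 n, |c n j| * z^j := by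
    refine Finset.sum_le_sum_of_subset_of_nonneg
      (Finset.Ico_subset_Ico le_rfl (by omega)) (fun j _ _ => ?_)
    exact mul_nonneg (abs_nonneg _) (pow_nonneg hz0.le _)
  -- tail term
  have hDterm : ∑ j ∈ Finset.Ico 1 (m+1), (b j - γ * ((j:ℝ) * a j))
      = ∑ i ∈ Finset.range m, f i := by
    rw [Finset.sum_Ico_eq_sum_range, Nat.add_sub_cancel]
    refine Finset.sum_congr rfl fun i _ => ?_
    rw [hfdef, add_comm 1 i]
    push_cast
    ring
  have htail : |∑ j ∈ Finset.Ico 1 (m+1), (b j - γ * ((j:ℝ) * a j))| / (n:ℝ)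
      ≤ K₄ * (z₁⁻¹) ^ (m+1) := by
    rw [hDterm]
    have h1 := tail_bound f z₁ hz₁ hGf hf0 m
    rw [← hK₄def] at h1
    calc |∑ i ∈ Finset.range m, f i| / (n:ℝ) ≤ |∑ i ∈ Finset.range m, f i| :=
          div_le_self (abs_nonneg _) (by exact_mod_cast hn1)
      _ ≤ K₄ * (z₁⁻¹) ^ (m+1) := h1
  -- assemble
  have hfinal : C*D*(∑ j ∈ Finset.Ico 1 (m+1), a j * z^j)/(n:ℝ)^2
        + (C+|γ|)*D*(∑ j ∈ Finset.Ico 1 (m+1), |b j| * z^j)/(n:ℝ)^2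
        + c₂*(∑ j ∈ Finset.Ico 1 (m+1), |c n j| * z^j)
      ≤ c₁/(n:ℝ)^2 + c₂ * (∑ j ∈ Finset.Ico 1 n, |c n j| * z ^ j) := by
    have g1 : C*D*(∑ j ∈ Finset.Ico 1 (m+1), a j * z^j)/(n:ℝ)^2
        ≤ C*D*Taz/(n:ℝ)^2 := by gcongr
    have g2 : (C+|γ|)*D*(∑ j ∈ Finset.Ico 1 (m+1), |b j| * z^j)/(n:ℝ)^2
        ≤ (C+|γ|)*D*Tbz/(n:ℝ)^2 := by gcongr
    have g3 : c₂*(∑ j ∈ Finset.Ico 1 (m+1), |c n j| * z^j)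
        ≤ c₂*(∑ j ∈ Finset.Ico 1 n, |c n j| * z^j) :=
      mul_le_mul_of_nonneg_left hC_le hc₂nn
    have heq : c₁/(n:ℝ)^2 = C*D*Taz/(n:ℝ)^2 + (C+|γ|)*D*Tbz/(n:ℝ)^2 := by
      rw [hc₁def]; ring
    rw [heq]
    exact add_le_add (add_le_add g1 g2) g3
  have hMn : M n = c₁ / (n:ℝ)^2 + c₂ * (∑ j ∈ Finset.Ico 1 n, |c n j| * z ^ j)
      + K₄ * (z₁⁻¹) ^ (m + 1) := by
    rw [hMdef, hmdef]
  rw [hMn]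
  linarith [hsum1, hsplit, hfinal, htail]
end

section
/- Assume the normalized conditions: the recursion x_n = Σ_{j=1}^{n-1} w_{n,j} x_{n-j} + r_n holds with w_{n,j} = a_j + b_j/n + c_{n,j} ≥ 0, conditions (r1)–(r3) hold with Σ_{n=1}^∞ a_n = 1 and z > 1, and set γ = (Σ_{n=1}^∞ b_n)/(Σ_{n=1}^∞ n a_n). Then the sequence y_n = x_n n^{-γ} is bounded from above. -/
set_option maxHeartbeats 2000000

open Finset Filter


/-- polynomial is dominated by geometric -/
lemma aux_poly_le_geom {p s : ℝ} (hp : 0 ≤ p) (hs : 1 < s) :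
    ∃ K : ℝ, 1 ≤ K ∧ ∀ n : ℕ, (n : ℝ) ^ p ≤ K * s ^ n := by
  set k := ⌈p⌉₊ with hk
  have h0 : Filter.Tendsto (fun n : ℕ => (n : ℝ) ^ k / s ^ n) atTop (nhds 0) :=
    tendsto_pow_const_div_const_pow_of_one_lt k hs
  obtain ⟨K0, hK0⟩ := h0.bddAbove_range
  refine ⟨max K0 1, le_max_right _ _, fun n => ?_⟩
  rcases Nat.eq_zero_or_pos n with rfl | hn
  · have : ((0:ℕ):ℝ) ^ p ≤ 1 := by simpa using Real.zero_rpow_le_one p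
    calc ((0:ℕ):ℝ) ^ p ≤ 1 := this
    _ ≤ max K0 1 * s ^ (0:ℕ) := by simp [le_max_right K0 1]
  · have h1n : (1:ℝ) ≤ (n:ℝ) := by exact_mod_cast hn
    have hnp : (n:ℝ) ^ p ≤ (n:ℝ) ^ (k:ℝ) :=
      Real.rpow_le_rpow_of_exponent_le h1n (Nat.le_ceil p)
    have hspos : (0:ℝ) < s ^ n := by positivity
    have hdiv : (n:ℝ) ^ k / s ^ n ≤ K0 := hK0 ⟨n, rfl⟩
    calc (n:ℝ) ^ p ≤ (n:ℝ) ^ k := by rwa [Real.rpow_natCast] at hnp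
    _ = ((n:ℝ) ^ k / s ^ n) * s ^ n := by field_simp
    _ ≤ K0 * s ^ n := by gcongr
    _ ≤ max K0 1 * s ^ n := by gcongr; exact le_max_left _ _

/-- Taylor-type bound for (1-t)^γ near 0. -/
lemma aux_taylor {γ t : ℝ} (ht0 : 0 ≤ t) (ht : t ≤ 1 / (2 * (|γ| + 1))) :
    |(1 - t) ^ γ - (1 - γ * t)| ≤ (2 * |γ| + 3 * γ ^ 2) * t ^ 2 := by
  have hγ0 : 0 ≤ |γ| := abs_nonneg γ
  have htt : t ≤ 1/2 := by
    have : 1 / (2 * (|γ| + 1)) ≤ 1/2 := by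
      rw [div_le_div_iff₀ (by positivity) (by norm_num)]
      nlinarith
    linarith
  have h1t : 0 < 1 - t := by linarith
  set L : ℝ := -Real.log (1 - t) with hL
  have hL1 : t ≤ L := by
    have := Real.log_le_sub_one_of_pos h1t
    simp only [hL]; linarith
  have hL2 : L ≤ t + 2 * t ^ 2 := by
    have h2 : Real.log (1 - t)⁻¹ ≤ (1 - t)⁻¹ - 1 := Real.log_le_sub_one_of_pos (by positivity)
    have h3 : (1 - t)⁻¹ - 1 = t / (1 - t) := by field_simp; ring
    have h4 : t / (1 - t) ≤ t + 2 * t ^ 2 := by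
      rw [div_le_iff₀ h1t]; nlinarith
    have h5 : L = Real.log (1 - t)⁻¹ := by rw [hL, Real.log_inv]
    linarith [h5 ▸ (h2.trans (h3 ▸ h4))]
  have hL0 : 0 ≤ L := le_trans ht0 hL1
  have hL3 : L ≤ 2 * t := by nlinarith
  set u : ℝ := γ * Real.log (1 - t) with hu
  have huL : u = -(γ * L) := by rw [hu, hL]; ring
  have habs : |u| ≤ 1 := by
    have h6 : |u| = |γ| * L := by
      rw [huL, abs_neg, abs_mul, abs_of_nonneg hL0]
    rw [h6]
    have h7 : |γ| * L ≤ |γ| * (2 * t) := by gcongr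
    have h8 : |γ| * (2 * t) ≤ |γ| * (2 * (1 / (2 * (|γ| + 1)))) := by gcongr
    have h9 : |γ| * (2 * (1 / (2 * (|γ| + 1)))) = |γ| / (|γ| + 1) := by
      field_simp
    have h10 : |γ| / (|γ| + 1) ≤ 1 := by
      rw [div_le_one (by positivity)]; linarith
    linarith
  have hrpow : (1 - t) ^ γ = Real.exp u := by
    rw [Real.rpow_def_of_pos h1t, hu, mul_comm]
  have hexp : |Real.exp u - (1 + u)| ≤ (3/4) * u ^ 2 := by
    have := Real.exp_bound habs (n := 2) (by norm_num)
    have hsum : ∑ m ∈ Finset.range 2, u ^ m / (m.factorial : ℝ) = 1 + u := by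
      simp [Finset.sum_range_succ]
    rw [hsum] at this
    calc |Real.exp u - (1 + u)| ≤ |u| ^ 2 * ((2:ℕ).succ / ((2:ℕ).factorial * 2)) := this
    _ = (3/4) * u ^2 := by
        rw [sq_abs]; norm_num [Nat.factorial]; ring
  have hu2 : u ^ 2 ≤ 4 * γ ^ 2 * t ^ 2 := by
    have : u ^ 2 = γ ^ 2 * L ^ 2 := by rw [huL]; ring
    rw [this]
    have hLsq : L ^ 2 ≤ (2 * t) ^ 2 := by nlinarith
    nlinarith [sq_nonneg γ, mul_le_mul_of_nonneg_left hLsq (sq_nonneg γ)]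
  have hlin : |u + γ * t| ≤ 2 * |γ| * t ^ 2 := by
    have : u + γ * t = γ * (t - L) := by rw [huL]; ring
    rw [this, abs_mul]
    have : |t - L| ≤ 2 * t ^ 2 := by
      rw [abs_le]; constructor <;> nlinarith
    calc |γ| * |t - L| ≤ |γ| * (2 * t ^ 2) := by gcongr
    _ = 2 * |γ| * t ^ 2 := by ring
  calc |(1 - t) ^ γ - (1 - γ * t)|
      = |(Real.exp u - (1 + u)) + (u + γ * t)| := by rw [hrpow]; ring_nf
    _ ≤ |Real.exp u - (1 + u)| + |u + γ * t| := abs_add_le _ _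
    _ ≤ (3/4) * u ^ 2 + 2 * |γ| * t ^ 2 := by gcongr
    _ ≤ (3/4) * (4 * γ ^ 2 * t ^ 2) + 2 * |γ| * t ^ 2 := by gcongr
    _ = (2 * |γ| + 3 * γ ^ 2) * t ^ 2 := by ring

/-- Lemma 3.3 of the paper (normalized case `∑ a_n = 1`, `z > 1`):
the sequence `y n = x n * n ^ (-γ)` is bounded from above. -/
theorem discrete_renewal_bounded_above
    (a b r : ℕ → ℝ) (c : ℕ → ℕ → ℝ) (x : ℕ → ℝ) (w : ℕ → ℕ → ℝ)
    (hw : ∀ n j : ℕ, w n j = a j + b j / (n : ℝ) + c n j)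
    (hwnn : ∀ n : ℕ, ∀ j ∈ Finset.Ico 1 n, 0 ≤ w n j)
    (hrec : ∀ n : ℕ, 1 ≤ n → x n = (∑ j ∈ Finset.Ico 1 n, w n j * x (n - j)) + r n)
    (ha_nn : ∀ n : ℕ, 1 ≤ n → 0 ≤ a n)
    (hgcd : ∀ d : ℕ, (∀ n : ℕ, 1 ≤ n → 0 < a n → d ∣ n) → d = 1)
    (ha_one : ∑' n : ℕ, a (n + 1) = 1)
    (hr_nn : ∀ n : ℕ, 0 ≤ r n)
    (hr_pos : ∃ n : ℕ, 0 < r n)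
    (z : ℝ) (hz : 1 < z)
    (haz : Summable fun n : ℕ => a (n + 1) * z ^ (n + 1))
    (hbz : Summable fun n : ℕ => |b (n + 1)| * z ^ (n + 1))
    (hcz : Summable fun n : ℕ => ∑ j ∈ Finset.Ico 1 n, |c n j| * z ^ j)
    (hrz : Summable fun n : ℕ => r (n + 1) * z ^ (n + 1))
    (γ : ℝ)
    (hγ : γ = (∑' n : ℕ, b (n + 1)) / (∑' n : ℕ, ((n : ℝ) + 1) * a (n + 1))) :
    ∃ M : ℝ, ∀ n : ℕ, 1 ≤ n → x n * (n : ℝ) ^ (-γ) ≤ M := by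
  have hz0 : (0:ℝ) < z := lt_trans one_pos hz
  have hz1 : (1:ℝ) ≤ z := hz.le
  -- square root of z
  set ζ : ℝ := z ^ ((2:ℝ)⁻¹) with hζdef
  have hζ1 : 1 < ζ := by
    rw [hζdef]
    exact Real.one_lt_rpow_iff_of_pos hz0 |>.2 (Or.inl ⟨hz, by norm_num⟩)
  have hζ0 : 0 < ζ := lt_trans one_pos hζ1
  have hζz : ζ * ζ = z := by
    rw [hζdef, ← Real.rpow_add hz0]
    norm_num
  have hζle : ζ ≤ z := by nlinarith
  have hζinv1 : ζ⁻¹ < 1 := inv_lt_one_of_one_lt₀ hζ1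
  have hζinv0 : (0:ℝ) < ζ⁻¹ := by positivity
  clear_value ζ
  -- constants
  set δ : ℝ := 1 / (2 * (|γ| + 1)) with hδdef
  have hδ0 : 0 < δ := by positivity
  have hδhalf : δ ≤ 1/2 := by
    rw [hδdef, div_le_div_iff₀ (by positivity) (by norm_num)]
    have := abs_nonneg γ; nlinarith
  clear_value δ
  set C : ℝ := 2 * |γ| + 3 * γ ^ 2 with hCdef
  have hC0 : 0 ≤ C := by positivity
  clear_value C
  set C₂ : ℝ := 1 + |γ| + C with hC₂def
  have hC₂0 : 0 ≤ C₂ := by positivity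
  clear_value C₂
  -- nonnegativity of terms
  have hann : ∀ i : ℕ, 0 ≤ a (i+1) := fun i => ha_nn (i+1) (by omega)
  -- summability of plain series
  have hsa : Summable (fun i : ℕ => a (i+1)) := by
    apply Summable.of_nonneg_of_le hann _ haz
    intro i
    calc a (i+1) = a (i+1) * 1 := (mul_one _).symm
    _ ≤ a (i+1) * z ^ (i+1) := by
        apply mul_le_mul_of_nonneg_left (one_le_pow₀ hz1) (hann i)
  have hsb : Summable (fun i : ℕ => |b (i+1)|) := by
    apply Summable.of_nonneg_of_le (fun i => abs_nonneg _) _ hbz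
    intro i
    calc |b (i+1)| = |b (i+1)| * 1 := (mul_one _).symm
    _ ≤ |b (i+1)| * z ^ (i+1) := by
        apply mul_le_mul_of_nonneg_left (one_le_pow₀ hz1) (abs_nonneg _)
  have hsb' : Summable (fun i : ℕ => b (i+1)) := hsb.of_abs
  -- pointwise decay constants
  set A₀ : ℝ := ∑' i : ℕ, a (i+1) * z ^ (i+1) with hA₀def
  have hA₀ : ∀ i : ℕ, a (i+1) * z ^ (i+1) ≤ A₀ :=
    fun i => Summable.le_tsum haz i (fun j _ => mul_nonneg (hann j) (by positivity))
  have hA₀0 : 0 ≤ A₀ := tsum_nonneg (fun i => mul_nonneg (hann i) (by positivity))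
  set B₀ : ℝ := ∑' i : ℕ, |b (i+1)| * z ^ (i+1) with hB₀def
  have hB₀ : ∀ i : ℕ, |b (i+1)| * z ^ (i+1) ≤ B₀ :=
    fun i => Summable.le_tsum hbz i (fun j _ => mul_nonneg (abs_nonneg _) (by positivity))
  have hB₀0 : 0 ≤ B₀ := tsum_nonneg (fun i => by positivity)
  set R₀ : ℝ := ∑' i : ℕ, r (i+1) * z ^ (i+1) with hR₀def
  have hR₀ : ∀ i : ℕ, r (i+1) * z ^ (i+1) ≤ R₀ :=
    fun i => Summable.le_tsum hrz i (fun j _ => mul_nonneg (hr_nn _) (by positivity))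
  -- decay restated
  have haA : ∀ j : ℕ, 1 ≤ j → a j ≤ A₀ / z ^ j := by
    intro j hj
    obtain ⟨i, rfl⟩ := Nat.exists_eq_add_of_le hj
    rw [le_div_iff₀ (by positivity), Nat.add_comm 1 i]
    exact hA₀ i
  have hbB : ∀ j : ℕ, 1 ≤ j → |b j| ≤ B₀ / z ^ j := by
    intro j hj
    obtain ⟨i, rfl⟩ := Nat.exists_eq_add_of_le hj
    rw [le_div_iff₀ (by positivity), Nat.add_comm 1 i]
    exact hB₀ i
  have hrR : ∀ j : ℕ, 1 ≤ j → r j ≤ R₀ / z ^ j := by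
    intro j hj
    obtain ⟨i, rfl⟩ := Nat.exists_eq_add_of_le hj
    rw [le_div_iff₀ (by positivity), Nat.add_comm 1 i]
    exact hR₀ i
  clear_value A₀ B₀ R₀
  -- weighted summabilities
  obtain ⟨K1z, hK1z1, hK1z⟩ := aux_poly_le_geom (p := 1) (s := z) one_pos.le hz
  obtain ⟨K2z, hK2z1, hK2z⟩ := aux_poly_le_geom (p := 2) (s := z) (by norm_num) hz
  have hsmu : Summable (fun i : ℕ => ((i:ℝ) + 1) * a (i+1)) := by
    apply Summable.of_nonneg_of_le (fun i => mul_nonneg (by positivity) (hann i)) _ (haz.mul_left K1z)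
    intro i
    have h1 : ((i:ℝ) + 1) ≤ K1z * z ^ (i+1) := by
      have := hK1z (i+1)
      rwa [Real.rpow_one, Nat.cast_add, Nat.cast_one] at this
    calc ((i:ℝ) + 1) * a (i+1) ≤ (K1z * z ^ (i+1)) * a (i+1) :=
          mul_le_mul_of_nonneg_right h1 (hann i)
    _ = K1z * (a (i+1) * z ^ (i+1)) := by ring
  have hs2 : Summable (fun i : ℕ => ((i:ℝ) + 1) ^ 2 * a (i+1)) := by
    apply Summable.of_nonneg_of_le (fun i => mul_nonneg (by positivity) (hann i)) _ (haz.mul_left K2z)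
    intro i
    have h1 : ((i:ℝ) + 1) ^ 2 ≤ K2z * z ^ (i+1) := by
      have := hK2z (i+1)
      rwa [Real.rpow_two, Nat.cast_add, Nat.cast_one] at this
    calc ((i:ℝ) + 1) ^ 2 * a (i+1) ≤ (K2z * z ^ (i+1)) * a (i+1) :=
          mul_le_mul_of_nonneg_right h1 (hann i)
    _ = K2z * (a (i+1) * z ^ (i+1)) := by ring
  have hsjb : Summable (fun i : ℕ => ((i:ℝ) + 1) * |b (i+1)|) := by
    apply Summable.of_nonneg_of_le (fun i => by positivity) _ (hbz.mul_left K1z)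
    intro i
    have h1 : ((i:ℝ) + 1) ≤ K1z * z ^ (i+1) := by
      have := hK1z (i+1)
      rwa [Real.rpow_one, Nat.cast_add, Nat.cast_one] at this
    calc ((i:ℝ) + 1) * |b (i+1)| ≤ (K1z * z ^ (i+1)) * |b (i+1)| :=
          mul_le_mul_of_nonneg_right h1 (abs_nonneg _)
    _ = K1z * (|b (i+1)| * z ^ (i+1)) := by ring
  set μ : ℝ := ∑' i : ℕ, ((i:ℝ) + 1) * a (i+1) with hμdef
  set Q₂ : ℝ := ∑' i : ℕ, ((i:ℝ) + 1) ^ 2 * a (i+1) with hQ₂def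
  set Qb : ℝ := ∑' i : ℕ, ((i:ℝ) + 1) * |b (i+1)| with hQbdef
  set βtot : ℝ := ∑' i : ℕ, b (i+1) with hβdef
  have hQ₂0 : 0 ≤ Q₂ := tsum_nonneg (fun i => mul_nonneg (by positivity) (hann i))
  have hQb0 : 0 ≤ Qb := tsum_nonneg (fun i => by positivity)
  have hμ1 : 1 ≤ μ := by
    rw [← ha_one]
    apply Summable.tsum_le_tsum _ hsa hsmu
    intro i
    nlinarith [hann i, Nat.cast_nonneg (α := ℝ) i]
  have hμ0 : 0 < μ := lt_of_lt_of_le one_pos hμ1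
  have hγμ : γ * μ = βtot := by
    rw [hγ]; field_simp
  clear_value μ Q₂ Qb βtot
  -- geometric decay of weighted terms
  obtain ⟨Kζ, hKζ1, hKζ⟩ := aux_poly_le_geom (p := 1) (s := ζ) one_pos.le hζ1
  set CA : ℝ := A₀ * Kζ with hCAdef
  have hCA0 : 0 ≤ CA := by
    rw [hCAdef]
    exact mul_nonneg hA₀0 (le_trans zero_le_one hKζ1)
  clear_value CA
  have hζzinv : ∀ k : ℕ, (z ^ k)⁻¹ ≤ (ζ⁻¹) ^ k := by
    intro k
    rw [← inv_pow]
    exact pow_le_pow_left₀ (by positivity) (by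
      rw [inv_le_inv₀ hz0 hζ0]; exact hζle) k
  have hta : ∀ k : ℕ, ((k:ℝ) + 1) * a (k+1) ≤ CA * (ζ⁻¹) ^ k := by
    intro k
    have h1 : ((k:ℝ) + 1) ≤ Kζ * ζ ^ (k+1) := by
      have := hKζ (k+1)
      rwa [Real.rpow_one, Nat.cast_add, Nat.cast_one] at this
    have h2 : a (k+1) ≤ A₀ / z ^ (k+1) := haA (k+1) (by omega)
    have h3 : ((k:ℝ) + 1) * a (k+1) ≤ (Kζ * ζ ^ (k+1)) * (A₀ / z ^ (k+1)) := by
      apply mul_le_mul h1 h2 (hann k) (by positivity)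
    have h4 : (Kζ * ζ ^ (k+1)) * (A₀ / z ^ (k+1)) = CA * (ζ⁻¹) ^ (k+1) := by
      rw [hCAdef]
      have hzz : z ^ (k+1) = ζ ^ (k+1) * ζ ^ (k+1) := by
        rw [← mul_pow, hζz]
      rw [hzz, inv_pow]
      field_simp
    have h5 : CA * (ζ⁻¹) ^ (k+1) ≤ CA * (ζ⁻¹) ^ k := by
      apply mul_le_mul_of_nonneg_left _ hCA0
      exact pow_le_pow_of_le_one (by positivity) hζinv1.le (by omega)
    rw [h4] at h3
    linarith
  have htb : ∀ k : ℕ, |b (k+1)| ≤ B₀ * (ζ⁻¹) ^ k := by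
    intro k
    have h2 : |b (k+1)| ≤ B₀ / z ^ (k+1) := hbB (k+1) (by omega)
    have h3 : B₀ / z ^ (k+1) ≤ B₀ * (ζ⁻¹) ^ (k+1) := by
      rw [div_eq_mul_inv]
      exact mul_le_mul_of_nonneg_left (hζzinv (k+1)) hB₀0
    have h5 : B₀ * (ζ⁻¹) ^ (k+1) ≤ B₀ * (ζ⁻¹) ^ k := by
      apply mul_le_mul_of_nonneg_left _ hB₀0
      exact pow_le_pow_of_le_one (by positivity) hζinv1.le (by omega)
    linarith
  have hgeom : Summable (fun k : ℕ => (ζ⁻¹) ^ k) :=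
    summable_geometric_of_lt_one hζinv0.le hζinv1
  set G : ℝ := (1 - ζ⁻¹)⁻¹ with hGdef
  have hG0 : 0 ≤ G := by
    rw [hGdef]
    have : (0:ℝ) < 1 - ζ⁻¹ := by linarith
    positivity
  have htsum_geom : ∑' k : ℕ, (ζ⁻¹) ^ k = G := tsum_geometric_of_lt_one hζinv0.le hζinv1
  clear_value G
  -- tail bounds
  have htail_a : ∀ m : ℕ, ∑' i : ℕ, ((((i+m):ℕ):ℝ) + 1) * a ((i+m)+1) ≤ CA * G * (ζ⁻¹) ^ m := by
    intro m
    have hs : Summable (fun i : ℕ => ((((i+m):ℕ):ℝ) + 1) * a ((i+m)+1)) :=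
      (summable_nat_add_iff m).2 hsmu
    have hbd : ∀ i : ℕ, ((((i+m):ℕ):ℝ) + 1) * a ((i+m)+1) ≤ (CA * (ζ⁻¹) ^ m) * (ζ⁻¹) ^ i := by
      intro i
      calc ((((i+m):ℕ):ℝ) + 1) * a ((i+m)+1) ≤ CA * (ζ⁻¹) ^ (i+m) := hta (i+m)
      _ = (CA * (ζ⁻¹) ^ m) * (ζ⁻¹) ^ i := by rw [pow_add]; ring
    calc ∑' i : ℕ, ((((i+m):ℕ):ℝ) + 1) * a ((i+m)+1)
        ≤ ∑' i : ℕ, (CA * (ζ⁻¹) ^ m) * (ζ⁻¹) ^ i :=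
          Summable.tsum_le_tsum hbd hs (hgeom.mul_left _)
    _ = (CA * (ζ⁻¹) ^ m) * G := by rw [tsum_mul_left, htsum_geom]
    _ = CA * G * (ζ⁻¹) ^ m := by ring
  have htail_b : ∀ m : ℕ, ∑' i : ℕ, |b ((i+m)+1)| ≤ B₀ * G * (ζ⁻¹) ^ m := by
    intro m
    have hs : Summable (fun i : ℕ => |b ((i+m)+1)|) := (summable_nat_add_iff m).2 hsb
    have hbd : ∀ i : ℕ, |b ((i+m)+1)| ≤ (B₀ * (ζ⁻¹) ^ m) * (ζ⁻¹) ^ i := by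
      intro i
      calc |b ((i+m)+1)| ≤ B₀ * (ζ⁻¹) ^ (i+m) := htb (i+m)
      _ = (B₀ * (ζ⁻¹) ^ m) * (ζ⁻¹) ^ i := by rw [pow_add]; ring
    calc ∑' i : ℕ, |b ((i+m)+1)|
        ≤ ∑' i : ℕ, (B₀ * (ζ⁻¹) ^ m) * (ζ⁻¹) ^ i := Summable.tsum_le_tsum hbd hs (hgeom.mul_left _)
    _ = (B₀ * (ζ⁻¹) ^ m) * G := by rw [tsum_mul_left, htsum_geom]
    _ = B₀ * G * (ζ⁻¹) ^ m := by ring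
  -- rpow helpers
  have hpow_eq : ∀ (e : ℝ) (n : ℕ), (z ^ e) ^ n = z ^ (e * n) := by
    intro e n
    rw [← Real.rpow_natCast (z ^ e) n, ← Real.rpow_mul hz0.le]
  have hδ2 : (0:ℝ) < δ / 2 := by linarith only [hδ0]
  have hzδ2 : 1 < z ^ (δ/2) :=
    Real.one_lt_rpow_iff_of_pos hz0 |>.2 (Or.inl ⟨hz, hδ2⟩)
  obtain ⟨K₁, hK₁1, hK₁⟩ := aux_poly_le_geom (p := |γ|) (s := z ^ (δ/2)) (abs_nonneg γ) hzδ2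
  have hK₁0 : (0:ℝ) ≤ K₁ := le_trans zero_le_one hK₁1
  set θa : ℝ := z ^ (-(δ/2)) with hθadef
  have hθa0 : 0 ≤ θa := Real.rpow_nonneg hz0.le _
  have hθa1 : θa < 1 := Real.rpow_lt_one_of_one_lt_of_neg hz (by linarith)
  clear_value θa
  -- key estimate : for j ≥ δ n, N^|γ| / z^j ≤ K₁ θa^n
  have hkey : ∀ (n j : ℕ), δ * (n:ℝ) ≤ (j:ℝ) → ((n:ℝ) ^ |γ|) * (z ^ j)⁻¹ ≤ K₁ * θa ^ n := by
    intro n j hj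
    have h1 : (n:ℝ) ^ |γ| ≤ K₁ * z ^ ((δ/2) * n) := by
      have := hK₁ n
      rwa [hpow_eq] at this
    have h2 : z ^ (δ * (n:ℝ)) ≤ z ^ (j:ℝ) := Real.rpow_le_rpow_of_exponent_le hz1 hj
    have h3 : (z:ℝ) ^ (j:ℕ) = z ^ ((j:ℕ):ℝ) := (Real.rpow_natCast z j).symm
    have h4 : ((z:ℝ) ^ (j:ℕ))⁻¹ ≤ (z ^ (δ * (n:ℝ)))⁻¹ := by
      rw [h3]
      exact inv_anti₀ (Real.rpow_pos_of_pos hz0 _) h2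
    have h5 : ((n:ℝ) ^ |γ|) * (z ^ j)⁻¹ ≤ (K₁ * z ^ ((δ/2) * n)) * (z ^ (δ * (n:ℝ)))⁻¹ := by
      apply mul_le_mul h1 h4 (by positivity) (by positivity)
    have h6 : (K₁ * z ^ ((δ/2) * n)) * (z ^ (δ * (n:ℝ)))⁻¹ = K₁ * θa ^ n := by
      rw [hθadef, hpow_eq, mul_assoc, ← Real.rpow_neg hz0.le, ← Real.rpow_add hz0]
      congr 1
      ring
    rw [h6] at h5
    exact h5
  -- region II bound for the kernel
  have hqII : ∀ (n k : ℕ), 1 ≤ k → k ≤ n → (k:ℝ) ^ γ * (n:ℝ) ^ (-γ) ≤ (n:ℝ) ^ |γ| := by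
    intro n k hk hkn
    have hn1 : 1 ≤ n := le_trans hk hkn
    have hk0 : (0:ℝ) < (k:ℝ) := by exact_mod_cast hk
    have hn0 : (0:ℝ) < (n:ℝ) := by exact_mod_cast hn1
    set X : ℝ := (k:ℝ) / (n:ℝ) with hXdef
    have hX0 : 0 < X := by positivity
    have hX1 : X ≤ 1 := by
      rw [hXdef, div_le_one hn0]; exact_mod_cast hkn
    have he : (k:ℝ) ^ γ * (n:ℝ) ^ (-γ) = X ^ γ := by
      rw [hXdef, Real.div_rpow hk0.le hn0.le, Real.rpow_neg hn0.le, div_eq_mul_inv]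
    rw [he]
    have h1 : X ^ γ ≤ X ^ (-|γ|) := Real.rpow_le_rpow_of_exponent_ge hX0 hX1 (neg_abs_le γ)
    have h2 : X ^ (-|γ|) = (X⁻¹) ^ |γ| := by
      rw [Real.rpow_neg hX0.le, ← Real.inv_rpow hX0.le]
    have h3 : X⁻¹ ≤ (n:ℝ) := by
      rw [hXdef, inv_div, div_le_iff₀ hk0]
      have hk1 : (1:ℝ) ≤ (k:ℝ) := by exact_mod_cast hk
      calc (n:ℝ) = (n:ℝ) * 1 := (mul_one _).symm
      _ ≤ (n:ℝ) * (k:ℝ) := by gcongr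
    have h4 : (X⁻¹) ^ |γ| ≤ (n:ℝ) ^ |γ| :=
      Real.rpow_le_rpow (by positivity) h3 (abs_nonneg γ)
    rw [h2] at h1
    linarith only [h1, h4]
  -- S, u, D'
  set u : ℕ → ℝ := fun n => ∑ j ∈ Finset.Ico 1 n, |c n j| * z ^ j with hudef
  have hu0 : ∀ n, 0 ≤ u n := fun n => Finset.sum_nonneg (fun j _ => by positivity)
  clear_value u
  set S : ℕ → ℝ := fun n => ∑ j ∈ Finset.Ico 1 n,
      w n j * (((n - j : ℕ):ℝ) ^ γ * (n:ℝ) ^ (-γ)) with hSdef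
  clear_value S
  set CT : ℝ := |γ| * (CA * G) + B₀ * G with hCTdef
  have hCT0 : 0 ≤ CT := by
    rw [hCTdef]
    exact add_nonneg (mul_nonneg (abs_nonneg γ) (mul_nonneg hCA0 hG0)) (mul_nonneg hB₀0 hG0)
  set CQ : ℝ := C * Q₂ + (|γ| + C) * Qb with hCQdef
  have hCQ0 : 0 ≤ CQ := by
    rw [hCQdef]
    exact add_nonneg (mul_nonneg hC0 hQ₂0) (mul_nonneg (add_nonneg (abs_nonneg γ) hC0) hQb0)
  set CW : ℝ := (A₀ + B₀) * K₁ with hCWdef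
  have hCW0 : 0 ≤ CW := by
    rw [hCWdef]
    exact mul_nonneg (add_nonneg hA₀0 hB₀0) hK₁0
  set CU : ℝ := C₂ + K₁ with hCUdef
  have hCU0 : 0 ≤ CU := by
    rw [hCUdef]
    exact add_nonneg hC₂0 hK₁0
  clear_value CT CQ CW CU
  set D' : ℕ → ℝ := fun n =>
      CT * (ζ⁻¹) ^ (⌊δ * (n:ℝ)⌋₊) + CQ / (n:ℝ) ^ 2 + CW * ((n:ℝ) * θa ^ n) + CU * u n
      with hD'def
  clear_value D'
  have hD'0 : ∀ n, 0 ≤ D' n := by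
    intro n
    have h1 : 0 ≤ CT * (ζ⁻¹) ^ (⌊δ * (n:ℝ)⌋₊) := mul_nonneg hCT0 (pow_nonneg hζinv0.le _)
    have h2 : 0 ≤ CQ / (n:ℝ) ^ 2 := div_nonneg hCQ0 (sq_nonneg _)
    have h3 : 0 ≤ CW * ((n:ℝ) * θa ^ n) :=
      mul_nonneg hCW0 (mul_nonneg (Nat.cast_nonneg _) (pow_nonneg hθa0 _))
    have h4 : 0 ≤ CU * u n := mul_nonneg hCU0 (hu0 n)
    rw [hD'def]
    exact add_nonneg (add_nonneg (add_nonneg h1 h2) h3) h4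
  -- The central estimate
  have hScore : ∀ n : ℕ, 2 ≤ n → S n ≤ 1 + D' n := by
    intro n hn2
    have hn1 : 1 ≤ n := by omega
    have hN1 : (1:ℝ) ≤ (n:ℝ) := by exact_mod_cast hn1
    have hN0 : (0:ℝ) < (n:ℝ) := by linarith only [hN1]
    set m : ℕ := ⌊δ * (n:ℝ)⌋₊ with hmdef
    have hm_le : (m:ℝ) ≤ δ * n := Nat.floor_le (by positivity)
    have hm_lt : δ * (n:ℝ) < (m:ℝ) + 1 := by
      have := Nat.lt_floor_add_one (δ * (n:ℝ))
      exact_mod_cast this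
    have hmn : m + 1 ≤ n := by
      have h1 : (m:ℝ) < (n:ℝ) := by
        have h2 : δ * (n:ℝ) ≤ (1/2) * n := mul_le_mul_of_nonneg_right hδhalf hN0.le
        linarith only [hm_le, h2, hN0]
      have : m < n := by exact_mod_cast h1
      omega
    clear_value m
    -- region I termwise bound
    have hterm1 : ∀ j ∈ Finset.Ico 1 (m+1),
        w n j * (((n - j : ℕ):ℝ) ^ γ * (n:ℝ) ^ (-γ)) ≤
          a j + (-(γ/(n:ℝ))) * ((j:ℝ) * a j) + (C/(n:ℝ)^2) * ((j:ℝ)^2 * a j)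
          + (1/(n:ℝ)) * b j + ((|γ|+C)/(n:ℝ)^2) * ((j:ℝ) * |b j|)
          + C₂ * (|c n j| * z ^ j) := by
      intro j hj
      rw [Finset.mem_Ico] at hj
      obtain ⟨hj1, hjm⟩ := hj
      have hjm' : j ≤ m := by omega
      have hjδ : (j:ℝ) ≤ δ * n := le_trans (by exact_mod_cast hjm') hm_le
      have hjn : j < n := by
        have : (j:ℝ) < (n:ℝ) := by
          have h2 : δ * (n:ℝ) ≤ (1/2) * n := mul_le_mul_of_nonneg_right hδhalf hN0.le
          linarith only [hjδ, h2, hN0]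
        exact_mod_cast this
      set t : ℝ := (j:ℝ)/(n:ℝ) with htdef
      have ht0 : 0 ≤ t := by positivity
      clear_value t
      have htδ : t ≤ δ := by
        rw [htdef, div_le_iff₀ hN0]
        linarith only [hjδ]
      have ht1 : t ≤ 1/2 := le_trans htδ hδhalf
      have ht1' : t ≤ 1 := by linarith only [ht1]
      have ht2t : t^2 ≤ t := by
        calc t^2 = t*t := sq t
        _ ≤ 1*t := mul_le_mul_of_nonneg_right ht1' ht0
        _ = t := one_mul t
      have ht2' : t^2 ≤ 1 := le_trans ht2t ht1'
      have h1t0 : (0:ℝ) < 1 - t := by linarith only [ht1]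
      have hcast : ((n - j:ℕ):ℝ) = (n:ℝ) - (j:ℝ) := by
        have hle : j ≤ n := by omega
        push_cast [hle]
        ring
      have hq_eq : ((n - j:ℕ):ℝ) ^ γ * (n:ℝ) ^ (-γ) = (1 - t) ^ γ := by
        have h1t : (1:ℝ) - t = ((n:ℝ) - (j:ℝ))/(n:ℝ) := by
          rw [htdef]; field_simp
        have hnj0 : (0:ℝ) ≤ (n:ℝ) - (j:ℝ) := by
          have : (j:ℝ) < (n:ℝ) := by exact_mod_cast hjn
          linarith only [this]
        rw [h1t, Real.div_rpow hnj0 hN0.le, hcast, Real.rpow_neg hN0.le, div_eq_mul_inv]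
      have htay : |(1 - t)^γ - (1 - γ*t)| ≤ C*t^2 := by
        rw [hCdef]
        exact aux_taylor ht0 (hδdef ▸ htδ)
      have habs := abs_le.1 htay
      have hqub : (1 - t)^γ ≤ 1 - γ*t + C*t^2 := by linarith only [habs.2]
      have hq1 : |(1 - t)^γ - 1| ≤ |γ| *t + C*t^2 := by
        have h2 : |(1-t)^γ - 1| ≤ |(1-t)^γ - (1-γ*t)| + |(1-γ*t) - 1| := abs_sub_le _ _ _
        have h3 : |(1-γ*t) - 1| = |γ| *t := by
          rw [show (1-γ*t) - 1 = -(γ*t) by ring, abs_neg, abs_mul, abs_of_nonneg ht0]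
        linarith only [h2, h3, htay]
      have hq0 : 0 ≤ (1-t)^γ := Real.rpow_nonneg h1t0.le γ
      have hqC₂ : (1 - t)^γ ≤ C₂ := by
        have h4 := abs_le.1 hq1
        have e1 : |γ| *t ≤ |γ| *1 := mul_le_mul_of_nonneg_left ht1' (abs_nonneg γ)
        have e2 : C*t^2 ≤ C*1 := mul_le_mul_of_nonneg_left ht2' hC0
        rw [hC₂def]
        linarith only [h4.2, e1, e2]
      have haj0 : 0 ≤ a j := ha_nn j hj1
      rw [hw n j, hq_eq]
      have hA : a j * (1-t)^γ ≤ a j + (-(γ/(n:ℝ)))*((j:ℝ)*a j) + (C/(n:ℝ)^2)*((j:ℝ)^2*a j) := by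
        have h1 : a j * (1-t)^γ ≤ a j * (1 - γ*t + C*t^2) := mul_le_mul_of_nonneg_left hqub haj0
        have h2 : a j * (1 - γ*t + C*t^2) = a j + (-(γ/(n:ℝ)))*((j:ℝ)*a j) + (C/(n:ℝ)^2)*((j:ℝ)^2*a j) := by
          rw [htdef]; field_simp; ring
        linarith only [h1, h2]
      have hB : (b j/(n:ℝ)) * (1-t)^γ ≤ (1/(n:ℝ))*b j + ((|γ|+C)/(n:ℝ)^2)*((j:ℝ)*|b j|) := by
        have h1 : (b j/(n:ℝ))*(1-t)^γ = b j/(n:ℝ) + (b j/(n:ℝ))*((1-t)^γ - 1) := by ring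
        have h2 : (b j/(n:ℝ))*((1-t)^γ - 1) ≤ |b j/(n:ℝ)| * |(1-t)^γ - 1| := by
          calc (b j/(n:ℝ))*((1-t)^γ - 1) ≤ |(b j/(n:ℝ))*((1-t)^γ - 1)| := le_abs_self _
          _ = |b j/(n:ℝ)| * |(1-t)^γ - 1| := abs_mul _ _
        have h3 : |b j/(n:ℝ)| * |(1-t)^γ - 1| ≤ (|b j|/(n:ℝ)) * ((|γ|+C)*t) := by
          have h4 : |b j/(n:ℝ)| = |b j|/(n:ℝ) := by
            rw [abs_div, abs_of_pos hN0]
          rw [h4]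
          apply mul_le_mul_of_nonneg_left _ (by positivity)
          have e1 : C*t^2 ≤ C*t := mul_le_mul_of_nonneg_left ht2t hC0
          linarith only [hq1, e1]
        have h5 : (|b j|/(n:ℝ)) * ((|γ|+C)*t) = ((|γ|+C)/(n:ℝ)^2)*((j:ℝ)*|b j|) := by
          rw [htdef]; field_simp
        have h6 : b j/(n:ℝ) = (1/(n:ℝ))*b j := by ring
        linarith only [h1, h2, h3, h5, h6]
      have hCc : c n j * (1-t)^γ ≤ C₂ * (|c n j| * z ^ j) := by
        have h1 : c n j * (1-t)^γ ≤ |c n j| * (1-t)^γ :=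
          mul_le_mul_of_nonneg_right (le_abs_self _) hq0
        have h2 : |c n j| * (1-t)^γ ≤ |c n j| * C₂ := mul_le_mul_of_nonneg_left hqC₂ (abs_nonneg _)
        have h3 : |c n j| * C₂ ≤ C₂ * (|c n j| * z ^ j) := by
          have hz1j : (1:ℝ) ≤ z ^ j := one_le_pow₀ hz1
          calc |c n j| * C₂ = C₂ * (|c n j| * 1) := by ring
          _ ≤ C₂ * (|c n j| * z^j) := by
              apply mul_le_mul_of_nonneg_left _ hC₂0
              exact mul_le_mul_of_nonneg_left hz1j (abs_nonneg _)
        linarith only [h1, h2, h3]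
      calc (a j + b j/(n:ℝ) + c n j) * (1-t)^γ
          = a j * (1-t)^γ + (b j/(n:ℝ))*(1-t)^γ + c n j * (1-t)^γ := by ring
      _ ≤ _ := by linarith only [hA, hB, hCc]
    -- reindex helper
    have hre : ∀ (f : ℕ → ℝ), ∑ j ∈ Finset.Ico 1 (m+1), f j = ∑ i ∈ Finset.range m, f (1+i) := by
      intro f
      rw [Finset.sum_Ico_eq_sum_range]
      norm_num
    -- region I sums
    set τa : ℝ := ∑' i:ℕ, ((((i+m):ℕ):ℝ)+1) * a ((i+m)+1) with hτadef
    set ρb : ℝ := ∑' i:ℕ, b ((i+m)+1) with hρdef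
    have hτa0 : 0 ≤ τa :=
      tsum_nonneg (fun i => mul_nonneg (by positivity) (hann (i+m)))
    have hτaB : τa ≤ CA*G*(ζ⁻¹)^m := htail_a m
    have hρB : |ρb| ≤ B₀*G*(ζ⁻¹)^m := by
      have hsumm : Summable (fun i:ℕ => |b ((i+m)+1)|) := (summable_nat_add_iff m).2 hsb
      have h1 : ‖∑' i:ℕ, b ((i+m)+1)‖ ≤ ∑' i:ℕ, ‖b ((i+m)+1)‖ := by
        apply norm_tsum_le_tsum_norm
        simpa [Real.norm_eq_abs] using hsumm
      rw [Real.norm_eq_abs] at h1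
      simp only [Real.norm_eq_abs] at h1
      exact le_trans h1 (htail_b m)
    clear_value τa ρb
    have hSa : ∑ j ∈ Finset.Ico 1 (m+1), a j ≤ 1 := by
      rw [hre, ← ha_one]
      have hcomm : ∀ i:ℕ, a (1+i) = a (i+1) := fun i => by rw [Nat.add_comm]
      simp only [hcomm]
      exact Summable.sum_le_tsum (Finset.range m) (fun i _ => hann i) hsa
    have hSja : ∑ j ∈ Finset.Ico 1 (m+1), (j:ℝ) * a j = μ - τa := by
      rw [hre]
      have hre2 : ∑ i ∈ Finset.range m, (((1+i:ℕ)):ℝ) * a (1+i)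
          = ∑ i ∈ Finset.range m, ((i:ℝ)+1) * a (i+1) := by
        apply Finset.sum_congr rfl
        intro i _
        rw [Nat.add_comm 1 i]
        push_cast
        ring
      rw [hre2]
      have h1 := Summable.sum_add_tsum_nat_add (f := fun i:ℕ => ((i:ℝ)+1)*a (i+1)) m hsmu
      try simp only at h1
      rw [hμdef, hτadef]
      linarith only [h1]
    have hSj2a : ∑ j ∈ Finset.Ico 1 (m+1), (j:ℝ)^2 * a j ≤ Q₂ := by
      rw [hre]
      have hre2 : ∑ i ∈ Finset.range m, (((1+i:ℕ)):ℝ)^2 * a (1+i)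
          = ∑ i ∈ Finset.range m, ((i:ℝ)+1)^2 * a (i+1) := by
        apply Finset.sum_congr rfl
        intro i _
        rw [Nat.add_comm 1 i]
        push_cast
        ring
      rw [hre2, hQ₂def]
      exact Summable.sum_le_tsum (Finset.range m) (fun i _ => mul_nonneg (by positivity) (hann i)) hs2
    have hSb : ∑ j ∈ Finset.Ico 1 (m+1), b j = βtot - ρb := by
      rw [hre]
      have hre2 : ∑ i ∈ Finset.range m, b (1+i) = ∑ i ∈ Finset.range m, b (i+1) := by
        apply Finset.sum_congr rfl
        intro i _
        rw [Nat.add_comm 1 i]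
      rw [hre2]
      have h1 := Summable.sum_add_tsum_nat_add (f := fun i:ℕ => b (i+1)) m hsb'
      try simp only at h1
      rw [hβdef, hρdef]
      linarith only [h1]
    have hSjb : ∑ j ∈ Finset.Ico 1 (m+1), (j:ℝ) * |b j| ≤ Qb := by
      rw [hre]
      have hre2 : ∑ i ∈ Finset.range m, (((1+i:ℕ)):ℝ) * |b (1+i)|
          = ∑ i ∈ Finset.range m, ((i:ℝ)+1) * |b (i+1)| := by
        apply Finset.sum_congr rfl
        intro i _
        rw [Nat.add_comm 1 i]
        push_cast
        ring
      rw [hre2, hQbdef]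
      exact Summable.sum_le_tsum (Finset.range m) (fun i _ => mul_nonneg (by positivity) (abs_nonneg _)) hsjb
    have hSc : ∑ j ∈ Finset.Ico 1 (m+1), |c n j| * z ^ j ≤ u n := by
      rw [hudef]
      apply Finset.sum_le_sum_of_subset_of_nonneg
      · exact Finset.Ico_subset_Ico le_rfl hmn
      · intro j _ _
        positivity
    -- region I total
    have hsumI : ∑ j ∈ Finset.Ico 1 (m+1), w n j * (((n - j : ℕ):ℝ) ^ γ * (n:ℝ) ^ (-γ))
        ≤ 1 + (-(γ*μ)/(n:ℝ) + βtot/(n:ℝ))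
          + (|γ| *(CA*G*(ζ⁻¹)^m) + B₀*G*(ζ⁻¹)^m)
          + (C*Q₂ + (|γ|+C)*Qb)/(n:ℝ)^2 + C₂ * u n := by
      have h0 := Finset.sum_le_sum hterm1
      have hsplit6 : ∑ j ∈ Finset.Ico 1 (m+1),
          (a j + (-(γ/(n:ℝ))) * ((j:ℝ) * a j) + (C/(n:ℝ)^2) * ((j:ℝ)^2 * a j)
          + (1/(n:ℝ)) * b j + ((|γ|+C)/(n:ℝ)^2) * ((j:ℝ) * |b j|)
          + C₂ * (|c n j| * z ^ j))
          = (∑ j ∈ Finset.Ico 1 (m+1), a j)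
          + (-(γ/(n:ℝ))) * (∑ j ∈ Finset.Ico 1 (m+1), (j:ℝ) * a j)
          + (C/(n:ℝ)^2) * (∑ j ∈ Finset.Ico 1 (m+1), (j:ℝ)^2 * a j)
          + (1/(n:ℝ)) * (∑ j ∈ Finset.Ico 1 (m+1), b j)
          + ((|γ|+C)/(n:ℝ)^2) * (∑ j ∈ Finset.Ico 1 (m+1), (j:ℝ) * |b j|)
          + C₂ * (∑ j ∈ Finset.Ico 1 (m+1), |c n j| * z ^ j) := by
        simp only [Finset.sum_add_distrib, Finset.mul_sum]
      rw [hsplit6] at h0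
      -- bound each piece
      have hb2 : (-(γ/(n:ℝ))) * (∑ j ∈ Finset.Ico 1 (m+1), (j:ℝ) * a j)
          ≤ -(γ*μ)/(n:ℝ) + |γ| *(CA*G*(ζ⁻¹)^m) := by
        rw [hSja]
        have h1 : (-(γ/(n:ℝ))) * (μ - τa) = -(γ*μ)/(n:ℝ) + (γ/(n:ℝ))*τa := by ring
        have h2 : (γ/(n:ℝ))*τa ≤ |γ| *τa := by
          apply mul_le_mul_of_nonneg_right _ hτa0
          calc γ/(n:ℝ) ≤ |γ/(n:ℝ)| := le_abs_self _
          _ = |γ|/(n:ℝ) := by rw [abs_div, abs_of_pos hN0]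
          _ ≤ |γ| := div_le_self (abs_nonneg _) hN1
        have h3 : |γ| *τa ≤ |γ| *(CA*G*(ζ⁻¹)^m) := mul_le_mul_of_nonneg_left hτaB (abs_nonneg _)
        linarith only [h1, h2, h3]
      have hb3 : (C/(n:ℝ)^2) * (∑ j ∈ Finset.Ico 1 (m+1), (j:ℝ)^2 * a j) ≤ (C/(n:ℝ)^2) * Q₂ :=
        mul_le_mul_of_nonneg_left hSj2a (by positivity)
      have hb4 : (1/(n:ℝ)) * (∑ j ∈ Finset.Ico 1 (m+1), b j)
          ≤ βtot/(n:ℝ) + B₀*G*(ζ⁻¹)^m := by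
        rw [hSb]
        have h1 : (1/(n:ℝ))*(βtot - ρb) = βtot/(n:ℝ) - ρb/(n:ℝ) := by ring
        have h2 : -(ρb/(n:ℝ)) ≤ |ρb|/(n:ℝ) := by
          rw [← neg_div]
          gcongr
          exact neg_le_abs ρb
        have h3 : |ρb|/(n:ℝ) ≤ |ρb| := div_le_self (abs_nonneg _) hN1
        linarith only [h1, h2, h3, hρB]
      have hb5 : ((|γ|+C)/(n:ℝ)^2) * (∑ j ∈ Finset.Ico 1 (m+1), (j:ℝ) * |b j|)
          ≤ ((|γ|+C)/(n:ℝ)^2) * Qb :=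
        mul_le_mul_of_nonneg_left hSjb (by positivity)
      have hb6 : C₂ * (∑ j ∈ Finset.Ico 1 (m+1), |c n j| * z ^ j) ≤ C₂ * u n :=
        mul_le_mul_of_nonneg_left hSc hC₂0
      have harith : (C/(n:ℝ)^2) * Q₂ + ((|γ|+C)/(n:ℝ)^2) * Qb = (C*Q₂ + (|γ|+C)*Qb)/(n:ℝ)^2 := by
        field_simp
      linarith only [h0, hb2, hb3, hb4, hb5, hb6, hSa, harith]
    -- region II termwise
    have hterm2 : ∀ j ∈ Finset.Ico (m+1) n,
        w n j * (((n - j : ℕ):ℝ) ^ γ * (n:ℝ) ^ (-γ))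
          ≤ (A₀+B₀)*K₁*θa^n + K₁*(|c n j| * z^j) := by
      intro j hj
      rw [Finset.mem_Ico] at hj
      have hj1 : 1 ≤ j := by omega
      have hjn : j < n := hj.2
      have hjδ : δ*(n:ℝ) ≤ (j:ℝ) := by
        have h1 : (m:ℝ)+1 ≤ (j:ℝ) := by exact_mod_cast hj.1
        linarith only [hm_lt, h1]
      have hq : ((n-j:ℕ):ℝ)^γ * (n:ℝ)^(-γ) ≤ (n:ℝ)^|γ| :=
        hqII n (n-j) (by omega) (by omega)
      have hw0 : 0 ≤ w n j := hwnn n j (Finset.mem_Ico.2 ⟨hj1, hjn⟩)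
      have step1 : w n j * (((n-j:ℕ):ℝ)^γ * (n:ℝ)^(-γ)) ≤ w n j * (n:ℝ)^|γ| :=
        mul_le_mul_of_nonneg_left hq hw0
      have hwb : w n j ≤ a j + |b j| + |c n j| := by
        rw [hw n j]
        have h1 : b j/(n:ℝ) ≤ |b j| := by
          calc b j/(n:ℝ) ≤ |b j / (n:ℝ)| := le_abs_self _
          _ = |b j|/(n:ℝ) := by rw [abs_div, abs_of_pos hN0]
          _ ≤ |b j| := div_le_self (abs_nonneg _) hN1
        linarith only [h1, le_abs_self (c n j)]
      have hNγ0 : (0:ℝ) ≤ (n:ℝ)^|γ| := Real.rpow_nonneg hN0.le _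
      have step2 : w n j * (n:ℝ)^|γ| ≤ (a j + |b j| + |c n j|) * (n:ℝ)^|γ| :=
        mul_le_mul_of_nonneg_right hwb hNγ0
      have hstepa : a j * (n:ℝ)^|γ| ≤ A₀ * (K₁*θa^n) := by
        have h1 : a j ≤ A₀/z^j := haA j hj1
        calc a j * (n:ℝ)^|γ| ≤ (A₀/z^j) * (n:ℝ)^|γ| := mul_le_mul_of_nonneg_right h1 hNγ0
        _ = A₀ * ((n:ℝ)^|γ| * (z^j)⁻¹) := by rw [div_eq_mul_inv]; ring
        _ ≤ A₀ * (K₁*θa^n) := mul_le_mul_of_nonneg_left (hkey n j hjδ) hA₀0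
      have hstepb : |b j| * (n:ℝ)^|γ| ≤ B₀ * (K₁*θa^n) := by
        have h1 : |b j| ≤ B₀/z^j := hbB j hj1
        calc |b j| * (n:ℝ)^|γ| ≤ (B₀/z^j) * (n:ℝ)^|γ| := mul_le_mul_of_nonneg_right h1 hNγ0
        _ = B₀ * ((n:ℝ)^|γ| * (z^j)⁻¹) := by rw [div_eq_mul_inv]; ring
        _ ≤ B₀ * (K₁*θa^n) := mul_le_mul_of_nonneg_left (hkey n j hjδ) hB₀0
      have hstepc : |c n j| * (n:ℝ)^|γ| ≤ K₁ * (|c n j| * z^j) := by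
        have hzj0 : (0:ℝ) < z^j := by positivity
        have h2 : (n:ℝ)^|γ| ≤ K₁ * z^j := by
          have h3 := hkey n j hjδ
          have hθ1 : θa^n ≤ 1 := pow_le_one₀ hθa0 hθa1.le
          have h4 : (n:ℝ)^|γ| = ((n:ℝ)^|γ| * (z^j)⁻¹) * z^j := by field_simp
          have h5 : ((n:ℝ)^|γ| * (z^j)⁻¹) * z^j ≤ (K₁ * θa^n) * z^j :=
            mul_le_mul_of_nonneg_right h3 hzj0.le
          have h6 : (K₁ * θa^n) * z^j ≤ (K₁ * 1) * z^j := by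
            apply mul_le_mul_of_nonneg_right _ hzj0.le
            exact mul_le_mul_of_nonneg_left hθ1 hK₁0
          rw [h4]
          linarith only [h5, h6]
        calc |c n j| * (n:ℝ)^|γ| ≤ |c n j| * (K₁*z^j) :=
            mul_le_mul_of_nonneg_left h2 (abs_nonneg _)
        _ = K₁ * (|c n j| * z^j) := by ring
      calc w n j * (((n-j:ℕ):ℝ)^γ * (n:ℝ)^(-γ))
          ≤ (a j + |b j| + |c n j|) * (n:ℝ)^|γ| := le_trans step1 step2
      _ = a j * (n:ℝ)^|γ| + |b j| * (n:ℝ)^|γ| + |c n j| * (n:ℝ)^|γ| := by ring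
      _ ≤ A₀*(K₁*θa^n) + B₀*(K₁*θa^n) + K₁*(|c n j| *z^j) := by
          linarith only [hstepa, hstepb, hstepc]
      _ = (A₀+B₀)*K₁*θa^n + K₁*(|c n j| *z^j) := by ring
    -- region II total
    have hsumII : ∑ j ∈ Finset.Ico (m+1) n, w n j * (((n - j : ℕ):ℝ) ^ γ * (n:ℝ) ^ (-γ))
        ≤ (n:ℝ) * ((A₀+B₀)*K₁*θa^n) + K₁ * u n := by
      have h0 := Finset.sum_le_sum hterm2
      have hsplit2 : ∑ j ∈ Finset.Ico (m+1) n, ((A₀+B₀)*K₁*θa^n + K₁*(|c n j| * z^j))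
          = ((Finset.Ico (m+1) n).card : ℝ) * ((A₀+B₀)*K₁*θa^n)
            + K₁ * (∑ j ∈ Finset.Ico (m+1) n, |c n j| * z^j) := by
        rw [Finset.sum_add_distrib, Finset.sum_const, ← Finset.mul_sum, nsmul_eq_mul]
      have hcard : ((Finset.Ico (m+1) n).card : ℝ) ≤ (n:ℝ) := by
        rw [Nat.card_Ico]
        exact_mod_cast Nat.sub_le n (m+1)
      have hconst0 : (0:ℝ) ≤ (A₀+B₀)*K₁*θa^n := by positivity
      have hsub : ∑ j ∈ Finset.Ico (m+1) n, |c n j| * z^j ≤ u n := by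
        rw [hudef]
        apply Finset.sum_le_sum_of_subset_of_nonneg
        · exact Finset.Ico_subset_Ico (by omega) le_rfl
        · intro j _ _
          positivity
      have h1 := mul_le_mul_of_nonneg_right hcard hconst0
      have h2 := mul_le_mul_of_nonneg_left hsub hK₁0
      rw [hsplit2] at h0
      linarith only [h0, h1, h2]
    -- assemble
    have hsplit := Finset.sum_Ico_consecutive
      (f := fun j => w n j * (((n - j : ℕ):ℝ) ^ γ * (n:ℝ) ^ (-γ)))
      (show 1 ≤ m+1 by omega) hmn
    have hcancel : -(γ*μ)/(n:ℝ) + βtot/(n:ℝ) = 0 := by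
      rw [← hγμ]; ring
    have hSn : S n = (∑ j ∈ Finset.Ico 1 (m+1), w n j * (((n - j : ℕ):ℝ) ^ γ * (n:ℝ) ^ (-γ)))
        + ∑ j ∈ Finset.Ico (m+1) n, w n j * (((n - j : ℕ):ℝ) ^ γ * (n:ℝ) ^ (-γ)) := by
      rw [hSdef]
      exact hsplit.symm
    rw [hSn]
    have hD'n : D' n = CT * (ζ⁻¹)^m + CQ/(n:ℝ)^2 + CW * ((n:ℝ)*θa^n) + CU * u n := by
      simp only [hD'def, ← hmdef]
    rw [hD'n, hCTdef, hCQdef, hCWdef, hCUdef]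
    linarith only [hsumI, hsumII, hcancel]
  -- S vanishes for n<2
  have hS01 : ∀ n : ℕ, n < 2 → S n = 0 := by
    intro n hn
    have he : Finset.Ico 1 n = ∅ := Finset.Ico_eq_empty (by omega)
    simp only [hSdef]
    rw [he, Finset.sum_empty]
  -- D
  set D : ℕ → ℝ := fun n => max (S n - 1) 0 with hDdef
  have hD0 : ∀ n, 0 ≤ D n := fun n => le_max_right _ _
  have hSD : ∀ n : ℕ, 1 ≤ n → S n ≤ 1 + D n := by
    intro n _
    have h := le_max_left (S n - 1) 0
    have h2 : S n - 1 ≤ D n := h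
    linarith only [h2]
  have hDD' : ∀ n, D n ≤ D' n := by
    intro n
    rcases lt_or_ge n 2 with h | h
    · have h2 : S n - 1 ≤ D' n := by
        rw [hS01 n h]
        linarith only [hD'0 n]
      exact max_le h2 (hD'0 n)
    · have h2 : S n - 1 ≤ D' n := by linarith only [hScore n h]
      exact max_le h2 (hD'0 n)
  clear_value D
  -- summability of D'
  have hsD'1 : Summable (fun n : ℕ => CT * (ζ⁻¹) ^ (⌊δ * (n:ℝ)⌋₊)) := by
    set θ₁ : ℝ := ζ ^ (-δ) with hθ₁def
    have hθ₁0 : 0 ≤ θ₁ := Real.rpow_nonneg hζ0.le _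
    have hθ₁1 : θ₁ < 1 := Real.rpow_lt_one_of_one_lt_of_neg hζ1 (by linarith only [hδ0])
    have hkeym : ∀ n : ℕ, (ζ⁻¹) ^ (⌊δ * (n:ℝ)⌋₊) ≤ ζ * θ₁ ^ n := by
      intro n
      set m' : ℕ := ⌊δ * (n:ℝ)⌋₊ with hm'def
      have hm'lt : δ * (n:ℝ) < (m':ℝ) + 1 := by
        have := Nat.lt_floor_add_one (δ * (n:ℝ))
        exact_mod_cast this
      have e1 : (ζ⁻¹) ^ m' = ζ ^ (-(m':ℝ)) := by
        rw [inv_pow, ← Real.rpow_natCast ζ m', ← Real.rpow_neg hζ0.le]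
      have e2 : ζ ^ (-(m':ℝ)) ≤ ζ ^ (1 - δ * (n:ℝ)) := by
        apply Real.rpow_le_rpow_of_exponent_le hζ1.le
        linarith only [hm'lt]
      have e3 : ζ ^ (1 - δ * (n:ℝ)) = ζ * θ₁ ^ n := by
        rw [hθ₁def, ← Real.rpow_natCast (ζ ^ (-δ)) n, ← Real.rpow_mul hζ0.le,
          Real.rpow_sub hζ0, Real.rpow_one]
        rw [div_eq_mul_inv, ← Real.rpow_neg hζ0.le]
        congr 1
        ring
      rw [e1]
      calc ζ ^ (-(m':ℝ)) ≤ ζ ^ (1 - δ * (n:ℝ)) := e2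
      _ = ζ * θ₁ ^ n := e3
    apply Summable.of_nonneg_of_le
      (fun n => mul_nonneg hCT0 (pow_nonneg hζinv0.le _))
      (fun n => ?_)
      (((summable_geometric_of_lt_one hθ₁0 hθ₁1).mul_left (CT * ζ)))
    calc CT * (ζ⁻¹) ^ (⌊δ * (n:ℝ)⌋₊) ≤ CT * (ζ * θ₁ ^ n) :=
        mul_le_mul_of_nonneg_left (hkeym n) hCT0
    _ = CT * ζ * θ₁ ^ n := by ring
  have hsD'2 : Summable (fun n : ℕ => CQ / (n:ℝ)^2) := by
    have h := (Real.summable_one_div_nat_pow.mpr (by norm_num : 1 < 2)).mul_left CQ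
    apply h.congr
    intro n
    rw [mul_one_div]
  have hsD'3 : Summable (fun n : ℕ => CW * ((n:ℝ) * θa^n)) := by
    have h1 : ‖θa‖ < 1 := by rwa [Real.norm_eq_abs, abs_of_nonneg hθa0]
    have h := (summable_pow_mul_geometric_of_norm_lt_one 1 h1).mul_left CW
    apply h.congr
    intro n
    rw [pow_one]
  have hsD'4 : Summable (fun n : ℕ => CU * u n) := by
    have h := hcz.mul_left CU
    apply h.congr
    intro n
    rw [hudef]
  have hsD' : Summable D' := by
    have h := ((hsD'1.add hsD'2).add hsD'3).add hsD'4
    apply h.congr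
    intro n
    rw [hD'def]
  have hsD : Summable D := Summable.of_nonneg_of_le hD0 hDD' hsD'
  -- s
  set s : ℕ → ℝ := fun n => r n * (n:ℝ)^(-γ) with hsdef
  have hs0 : ∀ n, 0 ≤ s n :=
    fun n => mul_nonneg (hr_nn n) (Real.rpow_nonneg (Nat.cast_nonneg n) _)
  clear_value s
  obtain ⟨Kγζ, hKγζ1, hKγζ⟩ := aux_poly_le_geom (p := |γ|) (s := ζ) (abs_nonneg γ) hζ1
  have hR₀0 : 0 ≤ R₀ := by
    rw [hR₀def]
    exact tsum_nonneg (fun i => mul_nonneg (hr_nn _) (by positivity))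
  have hssum : Summable s := by
    rw [← summable_nat_add_iff 1]
    apply Summable.of_nonneg_of_le (fun k => hs0 _) _ (hgeom.mul_left (R₀ * Kγζ * ζ⁻¹))
    intro k
    have hc1 : (1:ℝ) ≤ ((k+1:ℕ):ℝ) := by exact_mod_cast Nat.one_le_iff_ne_zero.2 (Nat.succ_ne_zero k)
    have h1 : r (k+1) ≤ R₀/z^(k+1) := hrR (k+1) (by omega)
    have h2 : ((k+1:ℕ):ℝ)^(-γ) ≤ ((k+1:ℕ):ℝ)^|γ| :=
      Real.rpow_le_rpow_of_exponent_le hc1 (neg_le_abs γ)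
    have h3 : ((k+1:ℕ):ℝ)^|γ| ≤ Kγζ * ζ^(k+1) := hKγζ (k+1)
    have h4 : 0 ≤ ((k+1:ℕ):ℝ)^(-γ) := Real.rpow_nonneg (by positivity) _
    have h5 : s (k+1) = r (k+1) * ((k+1:ℕ):ℝ)^(-γ) := by rw [hsdef]
    rw [h5]
    calc r (k+1) * ((k+1:ℕ):ℝ)^(-γ) ≤ (R₀/z^(k+1)) * (Kγζ * ζ^(k+1)) := by
          apply mul_le_mul h1 (h2.trans h3) h4 (by positivity)
    _ = R₀ * Kγζ * ζ⁻¹ * (ζ⁻¹) ^ k := by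
        have hzz : z^(k+1) = ζ^(k+1) * ζ^(k+1) := by rw [← mul_pow, hζz]
        rw [hzz, inv_pow]
        field_simp
        ring
  -- x is nonnegative
  have hx0 : ∀ n : ℕ, 1 ≤ n → 0 ≤ x n := by
    intro n
    induction n using Nat.strong_induction_on with
    | _ n ih =>
      intro hn
      rw [hrec n hn]
      apply add_nonneg _ (hr_nn n)
      apply Finset.sum_nonneg
      intro j hj
      have hj' := Finset.mem_Ico.1 hj
      exact mul_nonneg (hwnn n j hj) (ih (n - j) (by omega) (by omega))
  -- y, T, U, P
  set y : ℕ → ℝ := fun n => x n * (n:ℝ)^(-γ) with hydef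
  have hy0 : ∀ n, 1 ≤ n → 0 ≤ y n :=
    fun n hn => mul_nonneg (hx0 n hn) (Real.rpow_nonneg (Nat.cast_nonneg n) _)
  clear_value y
  have hy10 : 0 ≤ y 1 := hy0 1 le_rfl
  set T : ℕ → ℝ := fun n => ∑ k ∈ Finset.range (n+1), s k with hTdef
  set U : ℕ → ℝ := fun n => ∑ k ∈ Finset.range (n+1), D k with hUdef
  clear_value T U
  have hT0 : ∀ n, 0 ≤ T n := by
    intro n
    rw [hTdef]
    exact Finset.sum_nonneg (fun i _ => hs0 i)
  have hU0 : ∀ n, 0 ≤ U n := by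
    intro n
    rw [hUdef]
    exact Finset.sum_nonneg (fun i _ => hD0 i)
  have hTmono : ∀ k n : ℕ, k ≤ n → T k ≤ T n := by
    intro k n hkn
    rw [hTdef]
    exact Finset.sum_le_sum_of_subset_of_nonneg
      (Finset.range_subset_range.2 (by omega)) (fun i _ _ => hs0 i)
  have hUmono : ∀ k n : ℕ, k ≤ n → U k ≤ U n := by
    intro k n hkn
    rw [hUdef]
    exact Finset.sum_le_sum_of_subset_of_nonneg
      (Finset.range_subset_range.2 (by omega)) (fun i _ _ => hD0 i)
  have hTtop : ∀ n, T n ≤ ∑' k, s k := by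
    intro n
    rw [hTdef]
    exact Summable.sum_le_tsum _ (fun i _ => hs0 i) hssum
  have hUtop : ∀ n, U n ≤ ∑' k, D k := by
    intro n
    rw [hUdef]
    exact Summable.sum_le_tsum _ (fun i _ => hD0 i) hsD
  set P : ℕ → ℝ := fun n => (y 1 + 1 + T n) * Real.exp (U n) with hPdef
  clear_value P
  have hP0 : ∀ n, 0 ≤ P n := by
    intro n
    rw [hPdef]
    exact mul_nonneg (by linarith only [hy10, hT0 n]) (Real.exp_nonneg _)
  have hPmono : ∀ k n : ℕ, k ≤ n → P k ≤ P n := by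
    intro k n hkn
    rw [hPdef]
    apply mul_le_mul
    · linarith only [hTmono k n hkn]
    · exact Real.exp_le_exp.2 (hUmono k n hkn)
    · exact Real.exp_nonneg _
    · linarith only [hy10, hT0 n]
  -- the main induction
  have hmain : ∀ n : ℕ, 1 ≤ n → y n ≤ P n := by
    intro n
    induction n using Nat.strong_induction_on with
    | _ n ih =>
      intro hn
      rcases eq_or_lt_of_le hn with h1 | h2
      · -- n = 1
        have hn1 : n = 1 := h1.symm
        subst hn1
        have he : (1:ℝ) ≤ Real.exp (U 1) := Real.one_le_exp (hU0 1)
        have h3 : y 1 ≤ y 1 + 1 + T 1 := by linarith only [hT0 1]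
        have h4 : y 1 + 1 + T 1 ≤ (y 1 + 1 + T 1) * Real.exp (U 1) := by
          calc y 1 + 1 + T 1 = (y 1 + 1 + T 1) * 1 := (mul_one _).symm
          _ ≤ (y 1 + 1 + T 1) * Real.exp (U 1) :=
              mul_le_mul_of_nonneg_left he (by linarith only [hy10, hT0 1])
        simp only [hPdef]
        linarith only [h3, h4]
      · have hn2 : 2 ≤ n := h2
        have hN0 : (0:ℝ) < (n:ℝ) := by positivity
        have hyn : y n = (∑ j ∈ Finset.Ico 1 n,
            (w n j * (((n - j:ℕ):ℝ)^γ * (n:ℝ)^(-γ))) * y (n - j)) + s n := by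
          simp only [hydef, hsdef]
          rw [hrec n hn, add_mul, Finset.sum_mul]
          congr 1
          apply Finset.sum_congr rfl
          intro j hj
          have hj' := Finset.mem_Ico.1 hj
          have hnj1 : 1 ≤ n - j := by omega
          have hk0 : (0:ℝ) < ((n - j:ℕ):ℝ) := by exact_mod_cast hnj1
          have hone : ((n-j:ℕ):ℝ)^γ * ((n-j:ℕ):ℝ)^(-γ) = 1 := by
            rw [← Real.rpow_add hk0]
            simp
          calc w n j * x (n-j) * (n:ℝ)^(-γ)
              = w n j * x (n-j) * (n:ℝ)^(-γ) * 1 := (mul_one _).symm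
          _ = w n j * x (n-j) * (n:ℝ)^(-γ) * (((n-j:ℕ):ℝ)^γ * ((n-j:ℕ):ℝ)^(-γ)) := by
              rw [hone]
          _ = (w n j * (((n-j:ℕ):ℝ)^γ * (n:ℝ)^(-γ))) * (x (n-j) * ((n-j:ℕ):ℝ)^(-γ)) := by
              ring
        have hstep : ∀ j ∈ Finset.Ico 1 n,
            (w n j * (((n - j:ℕ):ℝ)^γ * (n:ℝ)^(-γ))) * y (n - j)
            ≤ (w n j * (((n - j:ℕ):ℝ)^γ * (n:ℝ)^(-γ))) * P (n-1) := by
          intro j hj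
          have hj' := Finset.mem_Ico.1 hj
          apply mul_le_mul_of_nonneg_left _
            (mul_nonneg (hwnn n j hj)
              (mul_nonneg (Real.rpow_nonneg (Nat.cast_nonneg _) _)
                (Real.rpow_nonneg (Nat.cast_nonneg _) _)))
          exact le_trans (ih (n-j) (by omega) (by omega)) (hPmono (n-j) (n-1) (by omega))
        have h5 : y n ≤ S n * P (n-1) + s n := by
          rw [hyn]
          have h6 := Finset.sum_le_sum hstep
          have h7 : ∑ j ∈ Finset.Ico 1 n, (w n j * (((n - j:ℕ):ℝ)^γ * (n:ℝ)^(-γ))) * P (n-1)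
              = S n * P (n-1) := by
            rw [hSdef, ← Finset.sum_mul]
          linarith only [h6, h7]
        have h8 : S n ≤ 1 + D n := hSD n hn
        have hP10 : 0 ≤ P (n-1) := hP0 (n-1)
        have h9 : S n * P (n-1) ≤ (1 + D n) * P (n-1) := mul_le_mul_of_nonneg_right h8 hP10
        have h10 : (1 + D n) ≤ Real.exp (D n) := by
          have := Real.add_one_le_exp (D n)
          linarith only [this]
        have h11 : (1 + D n) * P (n-1) ≤ Real.exp (D n) * P (n-1) :=
          mul_le_mul_of_nonneg_right h10 hP10
        have hn' : n - 1 + 1 = n := by omega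
        have hUkey : ∀ p:ℕ, U (p+1) = U p + D (p+1) := by
          intro p
          simp only [hUdef]
          exact Finset.sum_range_succ _ _
        have hTkey : ∀ p:ℕ, T (p+1) = T p + s (p+1) := by
          intro p
          simp only [hTdef]
          exact Finset.sum_range_succ _ _
        have hUsucc : U n = U (n-1) + D n := by
          have hk := hUkey (n-1)
          rwa [hn'] at hk
        have hTsucc : T n = T (n-1) + s n := by
          have hk := hTkey (n-1)
          rwa [hn'] at hk
        have h12 : Real.exp (D n) * P (n-1) = (y 1 + 1 + T (n-1)) * Real.exp (U n) := by
          rw [hPdef, hUsucc, Real.exp_add]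
          ring
        have h13 : (1:ℝ) ≤ Real.exp (U n) := Real.one_le_exp (hU0 n)
        have h14 : s n ≤ s n * Real.exp (U n) := by
          calc s n = s n * 1 := (mul_one _).symm
          _ ≤ s n * Real.exp (U n) := mul_le_mul_of_nonneg_left h13 (hs0 n)
        calc y n ≤ S n * P (n-1) + s n := h5
        _ ≤ Real.exp (D n) * P (n-1) + s n := by linarith only [h9, h11]
        _ = (y 1 + 1 + T (n-1)) * Real.exp (U n) + s n := by rw [h12]
        _ ≤ (y 1 + 1 + T (n-1)) * Real.exp (U n) + s n * Real.exp (U n) := by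
            linarith only [h14]
        _ = (y 1 + 1 + T n) * Real.exp (U n) := by rw [hTsucc]; ring
        _ = P n := by rw [hPdef]
  -- conclusion
  refine ⟨(y 1 + 1 + (∑' k, s k)) * Real.exp (∑' k, D k), ?_⟩
  intro n hn
  have h1 : x n * (n:ℝ)^(-γ) = y n := by rw [hydef]
  rw [h1]
  refine le_trans (hmain n hn) ?_
  have hStot0 : 0 ≤ ∑' k, s k := tsum_nonneg (fun i => hs0 i)
  rw [hPdef]
  apply mul_le_mul
  · linarith only [hTtop n]
  · exact Real.exp_le_exp.2 (hUtop n)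
  · exact Real.exp_nonneg _
  · linarith only [hy10, hStot0]
end

section
/- Assume the normalized conditions: (r1)–(r3) hold with Σ_{n=1}^∞ a_n = 1 and z > 1, and set γ = (Σ_{n=1}^∞ b_n)/(Σ_{n=1}^∞ n a_n). Then Σ_{j=1}^{n-1} | w_{n,j} (1 − j/n)^γ − a_j | → 0 as n → ∞, where w_{n,j} = a_j + b_j/n + c_{n,j}. -/
open Filter Finset

/-- Equation (3.9)-type statement of the paper (normalized case `∑ a_n = 1`, `z > 1`):
`∑_{j=1}^{n-1} | w n j * (1 - j/n)^γ - a j | → 0` as `n → ∞`. -/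
theorem discrete_renewal_error_tendsto_zero
    (a b : ℕ → ℝ) (c : ℕ → ℕ → ℝ) (w : ℕ → ℕ → ℝ)
    (hw : ∀ n j : ℕ, w n j = a j + b j / (n : ℝ) + c n j)
    (hwnn : ∀ n : ℕ, ∀ j ∈ Finset.Ico 1 n, 0 ≤ w n j)
    -- (r1), normalized
    (ha_nn : ∀ n : ℕ, 1 ≤ n → 0 ≤ a n)
    (hgcd : ∀ d : ℕ, (∀ n : ℕ, 1 ≤ n → 0 < a n → d ∣ n) → d = 1)
    (ha_one : ∑' n : ℕ, a (n + 1) = 1)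
    -- (r3), normalized with z > 1
    (z : ℝ) (hz : 1 < z)
    (haz : Summable fun n : ℕ => a (n + 1) * z ^ (n + 1))
    (hbz : Summable fun n : ℕ => |b (n + 1)| * z ^ (n + 1))
    (hcz : Summable fun n : ℕ => ∑ j ∈ Finset.Ico 1 n, |c n j| * z ^ j)
    (γ : ℝ)
    (hγ : γ = (∑' n : ℕ, b (n + 1)) / (∑' n : ℕ, ((n : ℝ) + 1) * a (n + 1))) :
    Filter.Tendsto
      (fun n : ℕ => ∑ j ∈ Finset.Ico 1 n,
        |w n j * ((1 : ℝ) - (j : ℝ) / (n : ℝ)) ^ γ - a j|)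
      Filter.atTop (nhds 0) := by
  have hzpos : (0:ℝ) < z := lt_trans one_pos hz
  -- exponential bound constant
  obtain ⟨M, hM0, hMz⟩ : ∃ M : ℝ, 0 < M ∧ ∀ j : ℕ, ((j:ℝ)+1) ^ |γ| ≤ M * z ^ j := by
    set k := ⌈|γ|⌉₊ with hk
    have h0 : Tendsto (fun n : ℕ => (n:ℝ)^k / z^n) atTop (nhds 0) :=
      tendsto_pow_const_div_const_pow_of_one_lt k hz
    have h1 : Tendsto (fun j : ℕ => ((j:ℝ)+1)^k / z^(j+1)) atTop (nhds 0) := by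
      refine (h0.comp (tendsto_add_atTop_nat 1)).congr fun j => ?_
      simp only [Function.comp_apply]
      push_cast
      ring
    have h2 : Tendsto (fun j : ℕ => ((j:ℝ)+1)^k / z^j) atTop (nhds 0) := by
      have h3 := h1.const_mul z
      rw [mul_zero] at h3
      refine h3.congr fun j => ?_
      rw [pow_succ]
      field_simp
    obtain ⟨M, hM⟩ := h2.bddAbove_range
    refine ⟨max M 1, lt_max_of_lt_right one_pos, fun j => ?_⟩
    have hMj : ((j:ℝ)+1)^k / z^j ≤ max M 1 :=
      le_trans (hM (Set.mem_range_self j)) (le_max_left _ _)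
    have hkpow : ((j:ℝ)+1) ^ |γ| ≤ ((j:ℝ)+1)^k := by
      rw [← Real.rpow_natCast ((j:ℝ)+1) k]
      exact Real.rpow_le_rpow_of_exponent_le (by norm_num [Nat.cast_nonneg]) (Nat.le_ceil _)
    refine le_trans hkpow ?_
    rw [div_le_iff₀ (pow_pos hzpos j)] at hMj
    linarith [hMj]
  -- key pointwise rpow bound
  have hxM : ∀ n j : ℕ, 1 ≤ j → j < n → ((1:ℝ) - (j:ℝ)/(n:ℝ)) ^ γ ≤ M * z ^ j := by
    intro n j hj1 hjn
    have hn0 : (0:ℝ) < (n:ℝ) := by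
      have : 0 < n := lt_of_le_of_lt (Nat.zero_le j) hjn
      exact_mod_cast this
    have hjr : (j:ℝ) < (n:ℝ) := by exact_mod_cast hjn
    have hx0 : (0:ℝ) < 1 - (j:ℝ)/(n:ℝ) := by
      rw [sub_pos, div_lt_one hn0]; exact hjr
    have hx1 : 1 - (j:ℝ)/(n:ℝ) ≤ 1 := by
      have : 0 ≤ (j:ℝ)/(n:ℝ) := by positivity
      linarith
    set x : ℝ := 1 - (j:ℝ)/(n:ℝ) with hxdef
    have hinv : x⁻¹ ≤ (j:ℝ) + 1 := by
      rw [inv_le_iff_one_le_mul₀ hx0]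
      have hjn1 : (j:ℝ) ≤ (n:ℝ) - 1 := by
        have : j + 1 ≤ n := hjn
        have := (Nat.cast_le (α := ℝ)).mpr this
        push_cast at this; linarith
      have hj0 : (0:ℝ) ≤ (j:ℝ) := Nat.cast_nonneg j
      have hkey : (n:ℝ) ≤ ((j:ℝ)+1) * ((n:ℝ) - (j:ℝ)) := by
        nlinarith [mul_nonneg hj0 (by linarith : (0:ℝ) ≤ (n:ℝ) - (j:ℝ) - 1)]
      have h1 : ((j:ℝ)+1) * x = ((j:ℝ)+1) * ((n:ℝ) - (j:ℝ)) / (n:ℝ) := by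
        rw [hxdef]; field_simp
      rw [h1, le_div_iff₀ hn0, one_mul]
      exact hkey
    calc x ^ γ ≤ x ^ (-|γ|) :=
          Real.rpow_le_rpow_of_exponent_ge hx0 hx1 (neg_abs_le γ)
      _ = (x⁻¹) ^ |γ| := by
          rw [Real.rpow_neg hx0.le, ← Real.inv_rpow hx0.le]
      _ ≤ ((j:ℝ)+1) ^ |γ| :=
          Real.rpow_le_rpow (inv_nonneg.mpr hx0.le) hinv (abs_nonneg γ)
      _ ≤ M * z ^ j := hMz j
  -- the dominated family for the `a`-term
  set F : ℕ → ℕ → ℝ := fun n j =>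
    if j + 1 < n then a (j+1) * |((1:ℝ) - ((j+1 : ℕ):ℝ)/(n:ℝ)) ^ γ - 1| else 0 with hF
  have hFnonneg : ∀ n j, 0 ≤ F n j := by
    intro n j
    rw [hF]
    dsimp only
    split
    · exact mul_nonneg (ha_nn _ (Nat.succ_le_succ (Nat.zero_le _))) (abs_nonneg _)
    · exact le_refl 0
  have ha_summable : Summable (fun j : ℕ => a (j+1)) := by
    refine Summable.of_nonneg_of_le
      (fun j => ha_nn _ (Nat.succ_le_succ (Nat.zero_le _))) (fun j => ?_) haz
    exact le_mul_of_one_le_right (ha_nn _ (Nat.succ_le_succ (Nat.zero_le _)))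
      (one_le_pow₀ hz.le)
  have hbound_summable : Summable (fun j : ℕ => a (j+1) * (M * z ^ (j+1) + 1)) := by
    have : Summable (fun j : ℕ => M * (a (j+1) * z ^ (j+1)) + a (j+1)) :=
      (haz.mul_left M).add ha_summable
    refine this.congr fun j => ?_
    ring
  have hF_le : ∀ n j, ‖F n j‖ ≤ a (j+1) * (M * z ^ (j+1) + 1) := by
    intro n j
    have hbnn : 0 ≤ a (j+1) * (M * z ^ (j+1) + 1) := by
      refine mul_nonneg (ha_nn _ (Nat.succ_le_succ (Nat.zero_le _))) ?_
      positivity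
    rw [hF]
    dsimp only
    split
    case isTrue h =>
      rw [Real.norm_eq_abs, abs_of_nonneg
        (mul_nonneg (ha_nn _ (Nat.succ_le_succ (Nat.zero_le _))) (abs_nonneg _))]
      refine mul_le_mul_of_nonneg_left ?_ (ha_nn _ (Nat.succ_le_succ (Nat.zero_le _)))
      have hx0 : (0:ℝ) < 1 - ((j+1 : ℕ):ℝ)/(n:ℝ) := by
        have hn0 : (0:ℝ) < (n:ℝ) := by
          have : 0 < n := lt_of_le_of_lt (Nat.zero_le _) h
          exact_mod_cast this
        rw [sub_pos, div_lt_one hn0]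
        exact_mod_cast h
      have h1 : |((1:ℝ) - ((j+1 : ℕ):ℝ)/(n:ℝ)) ^ γ - 1|
          ≤ ((1:ℝ) - ((j+1 : ℕ):ℝ)/(n:ℝ)) ^ γ + 1 := by
        refine (abs_sub _ _).trans ?_
        rw [abs_of_nonneg (Real.rpow_nonneg hx0.le γ), abs_one]
      refine h1.trans ?_
      have := hxM n (j+1) (Nat.succ_le_succ (Nat.zero_le _)) h
      push_cast at this ⊢
      linarith
    case isFalse h =>
      simpa using hbnn
  have hF_tendsto : ∀ j : ℕ, Tendsto (fun n => F n j) atTop (nhds 0) := by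
    intro j
    have h1 : Tendsto (fun n : ℕ => ((j+1 : ℕ):ℝ)/(n:ℝ)) atTop (nhds 0) :=
      tendsto_const_div_atTop_nhds_zero_nat _
    have h2 : Tendsto (fun n : ℕ => (1:ℝ) - ((j+1 : ℕ):ℝ)/(n:ℝ)) atTop (nhds 1) := by
      have := h1.const_sub (1:ℝ)
      simpa using this
    have hc : ContinuousAt (fun x : ℝ => x ^ γ) 1 :=
      Real.continuousAt_rpow_const 1 γ (Or.inl one_ne_zero)
    have h3 : Tendsto (fun n : ℕ => ((1:ℝ) - ((j+1 : ℕ):ℝ)/(n:ℝ)) ^ γ) atTop (nhds 1) := by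
      have := hc.tendsto.comp h2
      simpa [Function.comp_def, Real.one_rpow] using this
    have h4 : Tendsto
        (fun n : ℕ => a (j+1) * |((1:ℝ) - ((j+1 : ℕ):ℝ)/(n:ℝ)) ^ γ - 1|)
        atTop (nhds 0) := by
      have h5 : Tendsto (fun n : ℕ => ((1:ℝ) - ((j+1 : ℕ):ℝ)/(n:ℝ)) ^ γ - 1) atTop
          (nhds 0) := by
        simpa using h3.sub (tendsto_const_nhds (x := (1:ℝ)))
      have h6 := (h5.abs).const_mul (a (j+1))
      simpa using h6
    refine h4.congr' ?_
    filter_upwards [eventually_gt_atTop (j+1)] with n hn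
    rw [hF]
    simp only [if_pos hn]
  have hT1 : Tendsto (fun n : ℕ => ∑' j : ℕ, F n j) atTop (nhds 0) := by
    have := tendsto_tsum_of_dominated_convergence hbound_summable hF_tendsto
      (Eventually.of_forall hF_le)
    simpa using this
  -- identification of the a-term with the tsum
  have hT1eq : ∀ n : ℕ,
      ∑ j ∈ Finset.Ico 1 n, a j * |((1:ℝ) - (j:ℝ)/(n:ℝ)) ^ γ - 1| = ∑' j : ℕ, F n j := by
    intro n
    have htsum : ∑' j : ℕ, F n j = ∑ j ∈ Finset.range (n-1), F n j := by
      refine tsum_eq_sum ?_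
      intro j hj
      rw [Finset.mem_range, not_lt] at hj
      simp only [hF]
      rw [if_neg (show ¬ (j + 1 < n) by omega)]
    rw [htsum, Finset.sum_Ico_eq_sum_range]
    refine Finset.sum_congr rfl fun j hj => ?_
    rw [Finset.mem_range] at hj
    simp only [hF]
    rw [if_pos (show j + 1 < n by omega), Nat.add_comm 1 j]
  -- bound for the b-term
  set B : ℝ := ∑' j : ℕ, |b (j+1)| * z ^ (j+1) with hBdef
  have hB : ∀ n : ℕ, ∑ j ∈ Finset.Ico 1 n, |b j| * z ^ j ≤ B := by
    intro n
    rw [Finset.sum_Ico_eq_sum_range]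
    have h1 : ∑ j ∈ Finset.range (n-1), |b (1+j)| * z ^ (1+j)
        = ∑ j ∈ Finset.range (n-1), |b (j+1)| * z ^ (j+1) := by
      refine Finset.sum_congr rfl fun j _ => by rw [Nat.add_comm]
    rw [h1]
    exact Summable.sum_le_tsum _ (fun j _ => by positivity) hbz
  have hBnn : 0 ≤ B := tsum_nonneg fun j => by positivity
  -- the main estimate
  have hkey : ∀ n : ℕ,
      ∑ j ∈ Finset.Ico 1 n, |w n j * ((1:ℝ) - (j:ℝ)/(n:ℝ)) ^ γ - a j|
      ≤ (∑' j : ℕ, F n j) + M * B / (n:ℝ)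
        + M * ∑ j ∈ Finset.Ico 1 n, |c n j| * z ^ j := by
    intro n
    rw [← hT1eq n]
    have hterm : ∀ j ∈ Finset.Ico 1 n,
        |w n j * ((1:ℝ) - (j:ℝ)/(n:ℝ)) ^ γ - a j|
        ≤ a j * |((1:ℝ) - (j:ℝ)/(n:ℝ)) ^ γ - 1|
          + |b j| / (n:ℝ) * (M * z ^ j) + |c n j| * (M * z ^ j) := by
      intro j hj
      rw [Finset.mem_Ico] at hj
      obtain ⟨hj1, hjn⟩ := hj
      set x : ℝ := 1 - (j:ℝ)/(n:ℝ) with hxdef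
      have hn0 : (0:ℝ) < (n:ℝ) := by
        have : 0 < n := lt_of_le_of_lt (Nat.zero_le j) hjn
        exact_mod_cast this
      have hx0 : (0:ℝ) < x := by
        rw [hxdef, sub_pos, div_lt_one hn0]
        exact_mod_cast hjn
      have hxγnn : 0 ≤ x ^ γ := Real.rpow_nonneg hx0.le γ
      have hxγ : x ^ γ ≤ M * z ^ j := hxM n j hj1 hjn
      have hsplit : w n j * x ^ γ - a j
          = a j * (x ^ γ - 1) + b j / (n:ℝ) * x ^ γ + c n j * x ^ γ := by
        rw [hw n j]; ring
      rw [hsplit]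
      refine (abs_add_le _ _).trans ?_
      refine add_le_add (le_trans (abs_add_le _ _) (add_le_add ?_ ?_)) ?_
      · rw [abs_mul, abs_of_nonneg (ha_nn j hj1)]
      · rw [abs_mul, abs_div, abs_of_nonneg hn0.le]
        refine mul_le_mul_of_nonneg_left ?_ (by positivity)
        rw [abs_of_nonneg hxγnn]
        exact hxγ
      · rw [abs_mul]
        refine mul_le_mul_of_nonneg_left ?_ (abs_nonneg _)
        rw [abs_of_nonneg hxγnn]
        exact hxγ
    refine (Finset.sum_le_sum hterm).trans ?_
    rw [Finset.sum_add_distrib, Finset.sum_add_distrib]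
    refine add_le_add (add_le_add (le_refl _) ?_) ?_
    · -- b-term
      have h1 : ∑ j ∈ Finset.Ico 1 n, |b j| / (n:ℝ) * (M * z ^ j)
          = M / (n:ℝ) * ∑ j ∈ Finset.Ico 1 n, |b j| * z ^ j := by
        rw [Finset.mul_sum]
        refine Finset.sum_congr rfl fun j _ => by ring
      rw [h1]
      rcases Nat.eq_zero_or_pos n with hn | hn
      · simp [hn]
      · have hn0 : (0:ℝ) < (n:ℝ) := by exact_mod_cast hn
        have h2 : M / (n:ℝ) * ∑ j ∈ Finset.Ico 1 n, |b j| * z ^ j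
            ≤ M / (n:ℝ) * B :=
          mul_le_mul_of_nonneg_left (hB n) (by positivity)
        refine h2.trans ?_
        rw [div_mul_eq_mul_div]
    · -- c-term
      rw [Finset.mul_sum]
      refine le_of_eq (Finset.sum_congr rfl fun j _ => by ring)
  -- conclude by squeezing
  have hU : Tendsto (fun n : ℕ => (∑' j : ℕ, F n j) + M * B / (n:ℝ)
      + M * ∑ j ∈ Finset.Ico 1 n, |c n j| * z ^ j) atTop (nhds 0) := by
    have h2 : Tendsto (fun n : ℕ => M * B / (n:ℝ)) atTop (nhds 0) :=
      tendsto_const_div_atTop_nhds_zero_nat (M * B)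
    have h3 : Tendsto (fun n : ℕ => M * ∑ j ∈ Finset.Ico 1 n, |c n j| * z ^ j)
        atTop (nhds 0) := by
      have := (hcz.tendsto_atTop_zero).const_mul M
      simpa using this
    have := (hT1.add h2).add h3
    simpa using this
  refine squeeze_zero (fun n => Finset.sum_nonneg fun j _ => abs_nonneg _) hkey hU
end

section
/- Let (a_j) be a sequence with a_j ≥ 0 for all j ≥ 1, Σ_{j=1}^∞ a_j = 1 and Σ_{j=1}^∞ j a_j < ∞, and define y_n = 2 + sin(log(1+n)) for n ≥ 1. Then y_n − Σ_{j=1}^{n-1} a_j y_{n-j} → 0 as n → ∞, yet the sequence (y_n) does not converge. -/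
open Real Filter

lemma logdiff (m : ℕ) :
    Tendsto (fun n : ℕ => Real.log (1 + (n : ℝ)) - Real.log (1 + ((n - m : ℕ) : ℝ)))
      atTop (nhds 0) := by
  have hv : Tendsto (fun n : ℕ => (1 + (n : ℝ)) / (1 + ((n - m : ℕ) : ℝ))) atTop (nhds 1) := by
    have hden : Tendsto (fun n : ℕ => 1 + ((n - m : ℕ) : ℝ)) atTop atTop := by
      apply tendsto_atTop_add_const_left
      exact tendsto_natCast_atTop_atTop.comp (tendsto_sub_atTop_nat m)
    have h0 : Tendsto (fun n : ℕ => ((m : ℝ)) / (1 + ((n - m : ℕ) : ℝ))) atTop (nhds 0) :=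
      Tendsto.div_atTop tendsto_const_nhds hden
    have : ∀ᶠ n : ℕ in atTop, (1 + (n : ℝ)) / (1 + ((n - m : ℕ) : ℝ)) =
        1 + (m : ℝ) / (1 + ((n - m : ℕ) : ℝ)) := by
      filter_upwards [eventually_ge_atTop m] with n hn
      have : ((n - m : ℕ) : ℝ) = (n : ℝ) - m := by
        push_cast [Nat.cast_sub hn]; ring
      rw [this]
      have hpos : (0:ℝ) < 1 + ((n:ℝ) - m) := by
        have : (m:ℝ) ≤ n := Nat.cast_le.mpr hn
        linarith
      field_simp
      ring
    have h1 : Tendsto (fun n : ℕ => 1 + (m : ℝ) / (1 + ((n - m : ℕ) : ℝ))) atTop (nhds 1) := by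
      simpa using h0.const_add 1
    exact Filter.Tendsto.congr' (Filter.EventuallyEq.symm this) h1
  have hlog : Tendsto (fun n : ℕ => Real.log ((1 + (n : ℝ)) / (1 + ((n - m : ℕ) : ℝ))))
      atTop (nhds 0) := by
    have := (Real.continuousAt_log (by norm_num : (1:ℝ) ≠ 0)).tendsto.comp hv
    simpa [Function.comp_def] using this
  apply hlog.congr'
  filter_upwards [eventually_ge_atTop m] with n hn
  rw [Real.log_div] <;> positivity

lemma sin_log_floor (c : ℝ) :
    Tendsto (fun k : ℕ => Real.sin (Real.log (1 + (⌊Real.exp (c + 2 * π * k)⌋₊ : ℝ))))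
      atTop (nhds (Real.sin c)) := by
  set t : ℕ → ℝ := fun k => c + 2 * π * k with ht
  have htt : Tendsto t atTop atTop := by
    apply tendsto_atTop_add_const_left
    exact Tendsto.const_mul_atTop (by positivity : (0:ℝ) < 2 * π) tendsto_natCast_atTop_atTop
  set L : ℕ → ℝ := fun k => Real.log (1 + (⌊Real.exp (t k)⌋₊ : ℝ)) with hL
  have hdiff : Tendsto (fun k => L k - t k) atTop (nhds 0) := by
    have hub : Tendsto (fun k => Real.log (1 + Real.exp (-(t k)))) atTop (nhds 0) := by
      have he : Tendsto (fun k => 1 + Real.exp (-(t k))) atTop (nhds 1) := by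
        have := (Real.tendsto_exp_atBot).comp (tendsto_neg_atTop_atBot.comp htt)
        simpa using this.const_add 1
      have := (Real.continuousAt_log (by norm_num : (1:ℝ) ≠ 0)).tendsto.comp he
      simpa [Function.comp_def] using this
    apply squeeze_zero' ?_ ?_ hub
    · filter_upwards [htt.eventually_ge_atTop 0] with k hk
      have h1 : Real.exp (t k) ≤ 1 + (⌊Real.exp (t k)⌋₊ : ℝ) :=
        le_of_lt (by simpa [add_comm] using Nat.lt_floor_add_one (Real.exp (t k)))
      have := Real.log_le_log (Real.exp_pos _) h1
      simpa [hL, Real.log_exp] using this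
    · filter_upwards [htt.eventually_ge_atTop 0] with k hk
      have h2 : 1 + (⌊Real.exp (t k)⌋₊ : ℝ) ≤ Real.exp (t k) * (1 + Real.exp (-(t k))) := by
        have : (⌊Real.exp (t k)⌋₊ : ℝ) ≤ Real.exp (t k) :=
          Nat.floor_le (le_of_lt (Real.exp_pos _))
        have he : Real.exp (t k) * Real.exp (-(t k)) = 1 := by
          rw [← Real.exp_add]; simp
        nlinarith [Real.exp_pos (t k), Real.exp_pos (-(t k))]
      have hpos : (0:ℝ) < 1 + (⌊Real.exp (t k)⌋₊ : ℝ) := by positivity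
      have := Real.log_le_log hpos h2
      rw [Real.log_mul (ne_of_gt (Real.exp_pos _)) (by positivity), Real.log_exp] at this
      simpa [hL] using sub_le_sub_right this (t k)
  have hLc : Tendsto (fun k => L k - k * (2 * π)) atTop (nhds c) := by
    have : ∀ k : ℕ, L k - k * (2 * π) = (L k - t k) + c := by
      intro k; simp [ht]; ring
    rw [show (fun k : ℕ => L k - k * (2 * π)) = fun k => (L k - t k) + c from funext this]
    simpa using hdiff.add_const c
  have := (Real.continuous_sin.tendsto c).comp hLc
  apply this.congr
  intro k
  simp only [Function.comp]; exact (Real.sin_periodic.sub_nat_mul_eq (x := L k) k)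

lemma sin_lip (A B : ℝ) : |Real.sin A - Real.sin B| ≤ |A - B| := by
  rw [Real.sin_sub_sin, abs_mul, abs_mul, abs_two]
  have h1 := Real.abs_sin_le_abs (x := (A - B) / 2)
  have h2 := Real.abs_cos_le_one ((A + B) / 2)
  rw [abs_div, abs_two] at h1
  nlinarith [abs_nonneg (Real.sin ((A - B) / 2)), abs_nonneg (Real.cos ((A + B) / 2))]

/-- Remark 3 of the paper: for `y n = 2 + sin (log (1+n))` and any probability
distribution `(a_j)` on the positive integers with finite mean,
`y n - ∑_{j=1}^{n-1} a_j y_{n-j} → 0`, yet `(y n)` does not converge. -/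
theorem renewal_difference_to_zero_but_no_convergence
    (a : ℕ → ℝ)
    (ha_nn : ∀ j : ℕ, 1 ≤ j → 0 ≤ a j)
    (ha_sum : Summable fun j : ℕ => a (j + 1))
    (ha_one : ∑' j : ℕ, a (j + 1) = 1)
    (ha_mean : Summable fun j : ℕ => ((j : ℝ) + 1) * a (j + 1))
    (y : ℕ → ℝ)
    (hy : ∀ n : ℕ, y n = 2 + Real.sin (Real.log (1 + (n : ℝ)))) :
    Filter.Tendsto (fun n : ℕ => y n - ∑ j ∈ Finset.Ico 1 n, a j * y (n - j))
      Filter.atTop (nhds 0) ∧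
    ¬ ∃ L : ℝ, Filter.Tendsto y Filter.atTop (nhds L) := by
  have hybd : ∀ m : ℕ, |y m| ≤ 3 := by
    intro m
    rw [hy m, abs_le]
    constructor <;> nlinarith [Real.neg_one_le_sin (Real.log (1 + (m:ℝ))),
      Real.sin_le_one (Real.log (1 + (m:ℝ)))]
  have hydiff : ∀ m : ℕ, Tendsto (fun n : ℕ => y n - y (n - m)) atTop (nhds 0) := by
    intro m
    have hg : Tendsto (fun n : ℕ =>
        |Real.log (1 + (n : ℝ)) - Real.log (1 + ((n - m : ℕ) : ℝ))|) atTop (nhds 0) := by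
      simpa using (logdiff m).abs
    apply squeeze_zero_norm _ hg
    intro n
    have := sin_lip (Real.log (1 + (n : ℝ))) (Real.log (1 + ((n - m : ℕ) : ℝ)))
    rw [hy n, hy (n - m)]
    simpa [Real.norm_eq_abs, add_sub_add_left_eq_sub] using this
  constructor
  · -- Part 1
    set f : ℕ → ℕ → ℝ := fun n j =>
      a (j + 1) * y n - (if j + 1 < n then a (j + 1) * y (n - (j + 1)) else 0) with hf
    have hs2 : ∀ n : ℕ, Summable (fun j : ℕ =>
        (if j + 1 < n then a (j + 1) * y (n - (j + 1)) else 0)) := by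
      intro n
      apply summable_of_ne_finset_zero (s := Finset.range n)
      intro j hj
      simp only [Finset.mem_range, not_lt] at hj
      rw [if_neg (by omega)]
    have hkey : Tendsto (fun n : ℕ => ∑' j, f n j) atTop (nhds 0) := by
      have h0 : (0:ℝ) = ∑' _ : ℕ, (0:ℝ) := by simp
      rw [h0]
      apply tendsto_tsum_of_dominated_convergence (bound := fun j => 6 * a (j + 1))
        (ha_sum.mul_left 6)
      · intro j
        have hev : ∀ᶠ n : ℕ in atTop, a (j + 1) * (y n - y (n - (j + 1))) = f n j := by
          filter_upwards [eventually_gt_atTop (j + 1)] with n hn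
          rw [hf]; simp only [if_pos hn]; ring
        apply Filter.Tendsto.congr' hev
        simpa using (hydiff (j + 1)).const_mul (a (j + 1))
      · filter_upwards with n j
        have h1 : |a (j + 1) * y n| ≤ a (j + 1) * 3 := by
          rw [abs_mul, abs_of_nonneg (ha_nn (j+1) (by omega))]
          exact mul_le_mul_of_nonneg_left (hybd n) (ha_nn (j+1) (by omega))
        have h2 : |if j + 1 < n then a (j + 1) * y (n - (j + 1)) else 0| ≤ a (j + 1) * 3 := by
          split
          · rw [abs_mul, abs_of_nonneg (ha_nn (j+1) (by omega))]
            exact mul_le_mul_of_nonneg_left (hybd _) (ha_nn (j+1) (by omega))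
          · simp only [abs_zero]
            exact mul_nonneg (ha_nn (j+1) (by omega)) (by norm_num)
        calc ‖f n j‖ ≤ |a (j + 1) * y n| +
            |if j + 1 < n then a (j + 1) * y (n - (j + 1)) else 0| := abs_sub _ _
          _ ≤ 6 * a (j + 1) := by linarith
    apply hkey.congr
    intro n
    have hs1 : Summable (fun j : ℕ => a (j + 1) * y n) := ha_sum.mul_right (y n)
    rw [hf]
    rw [hs1.tsum_sub (hs2 n), tsum_mul_right, ha_one, one_mul]
    congr 1
    rw [tsum_eq_sum (s := Finset.range (n - 1)) (by
      intro j hj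
      simp only [Finset.mem_range] at hj
      rw [if_neg (by omega)])]
    rw [Finset.sum_Ico_eq_sum_range]
    apply Finset.sum_congr rfl
    intro j hj
    simp only [Finset.mem_range] at hj
    rw [if_pos (by omega)]
    congr 2 <;> omega
  · -- Part 2
    rintro ⟨L, hL⟩
    have hsub : ∀ c : ℝ, Tendsto (fun k : ℕ => y ⌊Real.exp (c + 2 * π * k)⌋₊)
        atTop (nhds (2 + Real.sin c)) := by
      intro c
      have : Tendsto (fun k : ℕ => 2 + Real.sin (Real.log
          (1 + (⌊Real.exp (c + 2 * π * k)⌋₊ : ℝ)))) atTop (nhds (2 + Real.sin c)) :=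
        (sin_log_floor c).const_add 2
      apply this.congr
      intro k
      rw [hy]
    have hidx : ∀ c : ℝ, Tendsto (fun k : ℕ => ⌊Real.exp (c + 2 * π * k)⌋₊) atTop atTop := by
      intro c
      apply tendsto_nat_floor_atTop.comp
      apply Real.tendsto_exp_atTop.comp
      apply tendsto_atTop_add_const_left
      exact Tendsto.const_mul_atTop (by positivity : (0:ℝ) < 2 * π) tendsto_natCast_atTop_atTop
    have h3 : L = 2 + Real.sin (π / 2) :=
      tendsto_nhds_unique (hL.comp (hidx (π / 2))) (hsub (π / 2))
    have h1 : L = 2 + Real.sin (-(π / 2)) :=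
      tendsto_nhds_unique (hL.comp (hidx (-(π / 2)))) (hsub (-(π / 2)))
    rw [Real.sin_pi_div_two] at h3
    rw [Real.sin_neg, Real.sin_pi_div_two] at h1
    linarith
end

section
/- Let (a_i) be a sequence with a_i ≥ 0 and Σ_{i=1}^∞ a_i < ∞, let x_k = 2 + sin(log(k+1)) for k ≥ 1, and for k ≥ 2 define w_{k,i} = a_i + ( x_k − Σ_{j=1}^{k-1} x_{k-j} a_j ) · ( Σ_{j=1}^{k-1} x_j )^{-1} for 1 ≤ i ≤ k−1. Then sup_{1 ≤ i ≤ k-1} |w_{k,i} − a_i| → 0 as k → ∞, the identity x_k = Σ_{i=1}^{k-1} x_{k-i} w_{k,i} holds for every k ≥ 2, and the sequence (x_k) does not converge. -/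
private lemma sin_lip_s8 (a b : ℝ) : |Real.sin a - Real.sin b| ≤ |a - b| := by
  rw [Real.sin_sub_sin]
  have h1 : |Real.sin ((a - b) / 2)| ≤ |(a - b) / 2| := Real.abs_sin_le_abs
  have h2 : |Real.cos ((a + b) / 2)| ≤ 1 := Real.abs_cos_le_one _
  calc |2 * Real.sin ((a - b) / 2) * Real.cos ((a + b) / 2)|
      = 2 * |Real.sin ((a - b) / 2)| * |Real.cos ((a + b) / 2)| := by
        rw [abs_mul, abs_mul, abs_two]
    _ ≤ 2 * |(a - b) / 2| * 1 := by
        apply mul_le_mul _ h2 (abs_nonneg _) (by positivity)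
        nlinarith [abs_nonneg (Real.sin ((a - b) / 2))]
    _ = |a - b| := by rw [abs_div, abs_two]; ring

private lemma aux_tendsto (c : ℝ) (hc : 0 ≤ c) :
    Filter.Tendsto (fun m : ℕ =>
      Real.sin (Real.log ((⌊Real.exp (c + m * (2 * Real.pi))⌋₊ : ℝ) + 1)))
      Filter.atTop (nhds (Real.sin c)) := by
  have hbound : ∀ m : ℕ,
      ‖Real.sin (Real.log ((⌊Real.exp (c + m * (2 * Real.pi))⌋₊ : ℝ) + 1)) - Real.sin c‖
        ≤ Real.exp (-(c + m * (2 * Real.pi))) := by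
    intro m
    set t := c + m * (2 * Real.pi) with ht
    have hsin : Real.sin t = Real.sin c := Real.sin_add_nat_mul_two_pi c m
    have h0 : (0:ℝ) < Real.exp t := Real.exp_pos t
    have h1 : Real.exp t ≤ (⌊Real.exp t⌋₊ : ℝ) + 1 := (Nat.lt_floor_add_one _).le
    have hlow : t ≤ Real.log ((⌊Real.exp t⌋₊ : ℝ) + 1) := by
      calc t = Real.log (Real.exp t) := (Real.log_exp t).symm
        _ ≤ _ := Real.log_le_log h0 h1
    have hup : Real.log ((⌊Real.exp t⌋₊ : ℝ) + 1) ≤ t + Real.exp (-t) := by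
      have hfl : (⌊Real.exp t⌋₊ : ℝ) ≤ Real.exp t := Nat.floor_le h0.le
      have hmul : Real.exp t * Real.exp (-t) = 1 := by
        rw [← Real.exp_add]; simp
      have hle : (⌊Real.exp t⌋₊ : ℝ) + 1 ≤ Real.exp t * (1 + Real.exp (-t)) := by
        nlinarith
      calc Real.log ((⌊Real.exp t⌋₊ : ℝ) + 1)
          ≤ Real.log (Real.exp t * (1 + Real.exp (-t))) :=
            Real.log_le_log (by positivity) hle
        _ = t + Real.log (1 + Real.exp (-t)) := by
            rw [Real.log_mul (ne_of_gt h0) (by positivity), Real.log_exp]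
        _ ≤ t + Real.exp (-t) := by
            have h2 : 1 + Real.exp (-t) ≤ Real.exp (Real.exp (-t)) := by
              have := Real.add_one_le_exp (Real.exp (-t)); linarith
            have hlog := Real.log_le_log (by positivity) h2
            rw [Real.log_exp] at hlog
            linarith
    rw [← hsin]
    calc ‖Real.sin (Real.log ((⌊Real.exp t⌋₊:ℝ)+1)) - Real.sin t‖
        ≤ |Real.log ((⌊Real.exp t⌋₊:ℝ)+1) - t| := sin_lip_s8 _ _
      _ ≤ Real.exp (-t) := by rw [abs_sub_comm, abs_of_nonpos (by linarith)]; linarith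
  have htT : Filter.Tendsto (fun m : ℕ => c + m * (2 * Real.pi)) Filter.atTop Filter.atTop := by
    apply Filter.tendsto_atTop_add_const_left
    exact tendsto_natCast_atTop_atTop.atTop_mul_const (by positivity)
  have hg : Filter.Tendsto (fun m : ℕ => Real.exp (-(c + m * (2 * Real.pi))))
      Filter.atTop (nhds 0) :=
    Real.tendsto_exp_atBot.comp (Filter.tendsto_neg_atTop_atBot.comp htT)
  exact tendsto_sub_nhds_zero_iff.mp (squeeze_zero_norm hbound hg)

/-- Remark 3.5 (Remark `rekmj1`) of the paper: with `x k = 2 + sin (log (k+1))` and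
`w k i = a i + (x k - ∑_{j=1}^{k-1} x_{k-j} a_j) / (∑_{j=1}^{k-1} x_j)`, the
perturbations `w k i - a i` tend to `0` uniformly in `i`, the recursion
`x k = ∑_{i=1}^{k-1} x_{k-i} w k i` holds, yet `(x k)` does not converge. -/
theorem perturbed_renewal_weights_counterexample
    (a : ℕ → ℝ)
    (ha_nn : ∀ i : ℕ, 1 ≤ i → 0 ≤ a i)
    (ha_sum : Summable fun i : ℕ => a (i + 1))
    (x : ℕ → ℝ)
    (hx : ∀ k : ℕ, 1 ≤ k → x k = 2 + Real.sin (Real.log ((k : ℝ) + 1)))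
    (w : ℕ → ℕ → ℝ)
    (hw : ∀ k : ℕ, 2 ≤ k → ∀ i : ℕ,
      w k i = a i + (x k - ∑ j ∈ Finset.Ico 1 k, x (k - j) * a j) /
        (∑ j ∈ Finset.Ico 1 k, x j)) :
    (∀ ε : ℝ, 0 < ε → ∃ K : ℕ, ∀ k : ℕ, K ≤ k → ∀ i ∈ Finset.Ico 1 k, |w k i - a i| < ε) ∧
    (∀ k : ℕ, 2 ≤ k → x k = ∑ i ∈ Finset.Ico 1 k, x (k - i) * w k i) ∧
    ¬ ∃ L : ℝ, Filter.Tendsto x Filter.atTop (nhds L) := by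
  -- Bounds on x
  have hxb : ∀ k : ℕ, 1 ≤ k → 1 ≤ x k ∧ x k ≤ 3 := by
    intro k hk
    rw [hx k hk]
    constructor
    · nlinarith [Real.neg_one_le_sin (Real.log ((k:ℝ)+1))]
    · nlinarith [Real.sin_le_one (Real.log ((k:ℝ)+1))]
  -- Lower bound on the sum S k
  have hS : ∀ k : ℕ, 2 ≤ k → ((k:ℝ) - 1) ≤ ∑ j ∈ Finset.Ico 1 k, x j := by
    intro k hk
    have : ∑ j ∈ Finset.Ico 1 k, (1:ℝ) ≤ ∑ j ∈ Finset.Ico 1 k, x j := by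
      apply Finset.sum_le_sum
      intro j hj
      exact (hxb j (Finset.mem_Ico.mp hj).1).1
    rw [Finset.sum_const, Nat.card_Ico] at this
    have hk1 : (1:ℕ) ≤ k := by omega
    rw [nsmul_eq_mul, mul_one, Nat.cast_sub hk1, Nat.cast_one] at this
    exact this
  have hSpos : ∀ k : ℕ, 2 ≤ k → 0 < ∑ j ∈ Finset.Ico 1 k, x j := by
    intro k hk
    have := hS k hk
    have : (2:ℝ) ≤ (k:ℝ) := by exact_mod_cast hk
    linarith [hS k hk]
  -- Bound on the numerator
  set C := ∑' i : ℕ, a (i + 1) with hC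
  have hC0 : 0 ≤ C := tsum_nonneg fun i => ha_nn (i+1) (by omega)
  have hD : ∀ k : ℕ, 2 ≤ k →
      |x k - ∑ j ∈ Finset.Ico 1 k, x (k - j) * a j| ≤ 3 + 3 * C := by
    intro k hk
    have hsum_le : ∑ j ∈ Finset.Ico 1 k, a j ≤ C := by
      rw [Finset.sum_Ico_eq_sum_range]
      have : ∀ i ∈ Finset.range (k-1), a (1 + i) = a (i + 1) := by
        intro i _; rw [add_comm]
      rw [Finset.sum_congr rfl this]
      exact Summable.sum_le_tsum _ (fun i _ => ha_nn (i+1) (by omega)) ha_sum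
    have hsum_nn : 0 ≤ ∑ j ∈ Finset.Ico 1 k, x (k - j) * a j := by
      apply Finset.sum_nonneg
      intro j hj
      obtain ⟨hj1, hj2⟩ := Finset.mem_Ico.mp hj
      have : 1 ≤ k - j := by omega
      exact mul_nonneg (by linarith [(hxb _ this).1]) (ha_nn j hj1)
    have hsum_ub : ∑ j ∈ Finset.Ico 1 k, x (k - j) * a j ≤ 3 * C := by
      calc ∑ j ∈ Finset.Ico 1 k, x (k - j) * a j
          ≤ ∑ j ∈ Finset.Ico 1 k, 3 * a j := by
            apply Finset.sum_le_sum
            intro j hj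
            obtain ⟨hj1, hj2⟩ := Finset.mem_Ico.mp hj
            have hkj : 1 ≤ k - j := by omega
            exact mul_le_mul_of_nonneg_right (hxb _ hkj).2 (ha_nn j hj1)
        _ = 3 * ∑ j ∈ Finset.Ico 1 k, a j := by rw [Finset.mul_sum]
        _ ≤ 3 * C := by linarith
    have hxk := hxb k (by omega)
    rw [abs_le]
    constructor <;> nlinarith
  refine ⟨?_, ?_, ?_⟩
  · -- uniform convergence of perturbations
    intro ε hε
    refine ⟨⌊(3 + 3 * C) / ε⌋₊ + 2, ?_⟩
    intro k hk i hi
    have hk2 : 2 ≤ k := by omega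
    rw [hw k hk2 i]
    have hSp := hSpos k hk2
    have hSk := hS k hk2
    have hDk := hD k hk2
    have habs : |a i + (x k - ∑ j ∈ Finset.Ico 1 k, x (k - j) * a j) /
        (∑ j ∈ Finset.Ico 1 k, x j) - a i|
        = |x k - ∑ j ∈ Finset.Ico 1 k, x (k - j) * a j| / (∑ j ∈ Finset.Ico 1 k, x j) := by
      rw [add_sub_cancel_left, abs_div, abs_of_pos hSp]
    rw [habs]
    have hfloor : (3 + 3 * C) / ε < (⌊(3 + 3 * C) / ε⌋₊ : ℝ) + 1 := Nat.lt_floor_add_one _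
    have hkr : ((⌊(3 + 3 * C) / ε⌋₊ : ℝ) + 1) ≤ (k:ℝ) - 1 := by
      have h : ((⌊(3 + 3 * C) / ε⌋₊ + 2 : ℕ) : ℝ) ≤ (k : ℝ) := by exact_mod_cast hk
      push_cast at h
      linarith
    have hk1pos : (0:ℝ) < (k:ℝ) - 1 := by
      have : (2:ℝ) ≤ (k:ℝ) := by exact_mod_cast hk2
      linarith
    calc |x k - ∑ j ∈ Finset.Ico 1 k, x (k - j) * a j| / (∑ j ∈ Finset.Ico 1 k, x j)
        ≤ (3 + 3 * C) / ((k:ℝ) - 1) := by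
          apply div_le_div₀ (by positivity) hDk hk1pos hSk
      _ < ε := by
          rw [div_lt_iff₀ hk1pos]
          have h1 : (3 + 3 * C) < ε * ((⌊(3 + 3 * C) / ε⌋₊ : ℝ) + 1) := by
            rw [← div_lt_iff₀' hε]
            exact hfloor
          nlinarith
  · -- the recursion holds
    intro k hk
    have hS0 : (∑ j ∈ Finset.Ico 1 k, x j) ≠ 0 := (hSpos k hk).ne'
    have hre : ∑ i ∈ Finset.Ico 1 k, x (k - i) = ∑ j ∈ Finset.Ico 1 k, x j := by
      rw [Finset.sum_Ico_eq_sum_range, Finset.sum_Ico_eq_sum_range]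
      rw [← Finset.sum_range_reflect (fun i => x (1 + i)) (k - 1)]
      apply Finset.sum_congr rfl
      intro i hi
      have := Finset.mem_range.mp hi
      congr 1
      omega
    set D := x k - ∑ j ∈ Finset.Ico 1 k, x (k - j) * a j with hDdef
    symm
    calc ∑ i ∈ Finset.Ico 1 k, x (k - i) * w k i
        = ∑ i ∈ Finset.Ico 1 k,
            (x (k - i) * a i + x (k - i) * (D / (∑ j ∈ Finset.Ico 1 k, x j))) := by
          apply Finset.sum_congr rfl
          intro i _
          rw [hw k hk i]
          ring
      _ = (∑ i ∈ Finset.Ico 1 k, x (k - i) * a i) +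
            (∑ i ∈ Finset.Ico 1 k, x (k - i)) * (D / (∑ j ∈ Finset.Ico 1 k, x j)) := by
          rw [Finset.sum_add_distrib, ← Finset.sum_mul]
      _ = (∑ i ∈ Finset.Ico 1 k, x (k - i) * a i) + D := by
          rw [hre, mul_div_assoc', mul_comm, mul_div_assoc, div_self hS0, mul_one]
      _ = x k := by rw [hDdef]; ring
  · -- x does not converge
    rintro ⟨L, hL⟩
    have key : ∀ c : ℝ, 0 ≤ c → L = 2 + Real.sin c := by
      intro c hc
      set n : ℕ → ℕ := fun m => ⌊Real.exp (c + m * (2 * Real.pi))⌋₊ with hn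
      have hn1 : ∀ m : ℕ, 1 ≤ n m := by
        intro m
        apply Nat.le_floor
        rw [Nat.cast_one]
        exact Real.one_le_exp (by positivity)
      have htT : Filter.Tendsto (fun m : ℕ => c + m * (2 * Real.pi))
          Filter.atTop Filter.atTop := by
        apply Filter.tendsto_atTop_add_const_left
        exact tendsto_natCast_atTop_atTop.atTop_mul_const (by positivity)
      have hnT : Filter.Tendsto n Filter.atTop Filter.atTop :=
        tendsto_nat_floor_atTop.comp (Real.tendsto_exp_atTop.comp htT)
      have h1 : Filter.Tendsto (fun m => x (n m)) Filter.atTop (nhds L) :=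
        hL.comp hnT
      have h2 : Filter.Tendsto (fun m => x (n m)) Filter.atTop
          (nhds (2 + Real.sin c)) := by
        have heq : ∀ m : ℕ, x (n m) = 2 +
            Real.sin (Real.log ((⌊Real.exp (c + m * (2 * Real.pi))⌋₊ : ℝ) + 1)) := by
          intro m
          rw [hx (n m) (hn1 m)]
        simp only [heq]
        exact (aux_tendsto c hc).const_add 2
      exact tendsto_nhds_unique h1 h2
    have e1 := key (Real.pi / 2) (by positivity)
    have e2 := key (Real.pi / 2 + Real.pi) (by positivity)
    rw [Real.sin_pi_div_two] at e1
    rw [Real.sin_add_pi, Real.sin_pi_div_two] at e2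
    linarith
end

section
/- Let α, β > 0 be real numbers with α/β irrational, and let ε > 0. Then there exists T > 0 such that every real t ≥ T can be written in the form t = mα + nβ + ρ with m, n nonnegative integers and 0 < ρ < ε; equivalently, every t ≥ T lies within distance ε above some element of the set {mα + nβ : m, n ∈ ℕ}. -/
/-- Quantitative step: if `δ ∈ (0, min γ ε)` and every `q*γ + j*δ` (with `c*j ≤ q`)
lies in the semigroup `{m*α + n*β}`, then every large `t` is within `ε` above the
semigroup. -/
lemma key_step (α β γ δ ε : ℝ) (hγ : 0 < γ) (hδ : 0 < δ) (hδγ : δ < γ) (hδε : δ < ε)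
    (c : ℕ)
    (h : ∀ q j : ℕ, c * j ≤ q → ∃ m n : ℕ, (m : ℝ) * α + (n : ℝ) * β = q * γ + j * δ) :
    ∃ T : ℝ, 0 < T ∧ ∀ t : ℝ, T ≤ t →
      ∃ m n : ℕ, ∃ ρ : ℝ, t = (m : ℝ) * α + (n : ℝ) * β + ρ ∧ 0 < ρ ∧ ρ < ε := by
  obtain ⟨J, hJ⟩ : ∃ J : ℕ, J = ⌈2 * γ / δ⌉₊ := ⟨_, rfl⟩
  refine ⟨((c * J + 2 : ℕ) : ℝ) * γ, by positivity, fun t ht => ?_⟩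
  have htγ : ((c * J + 2 : ℕ) : ℝ) ≤ t / γ := (le_div_iff₀ hγ).2 ht
  have ht0 : (0:ℝ) ≤ t / γ := le_trans (by positivity) htγ
  obtain ⟨Q, hQ⟩ : ∃ Q : ℕ, Q = ⌊t / γ⌋₊ := ⟨_, rfl⟩
  have hQge : c * J + 2 ≤ Q := by rw [hQ]; exact Nat.le_floor htγ
  obtain ⟨q, hq⟩ : ∃ q : ℕ, q = Q - 1 := ⟨_, rfl⟩
  have hq1 : q + 1 = Q := by omega
  have hqge : c * J + 1 ≤ q := by omega
  have hsγ : γ ≤ t - (q : ℝ) * γ := by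
    have h1 : ((q : ℝ) + 1) ≤ t / γ := by
      have h2 := Nat.floor_le ht0
      rw [← hQ] at h2
      calc ((q:ℝ) + 1) = ((q + 1 : ℕ) : ℝ) := by push_cast; ring
        _ = (Q : ℝ) := by rw [hq1]
        _ ≤ t / γ := h2
    have := (le_div_iff₀ hγ).1 h1
    nlinarith
  have hs2γ : t - (q : ℝ) * γ < 2 * γ := by
    have h1 : t / γ < (Q : ℝ) + 1 := by rw [hQ]; exact Nat.lt_floor_add_one _
    have h2 : (Q : ℝ) = (q : ℝ) + 1 := by rw [← hq1]; push_cast; ring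
    rw [h2] at h1
    have := (div_lt_iff₀ hγ).1 h1
    nlinarith
  set s : ℝ := t - (q : ℝ) * γ with hs
  have hs0 : 0 < s := lt_of_lt_of_le hγ hsγ
  obtain ⟨j, hj⟩ : ∃ j : ℕ, j = ⌈s / δ⌉₊ - 1 := ⟨_, rfl⟩
  have hceil1 : 1 ≤ ⌈s / δ⌉₊ := Nat.one_le_ceil_iff.2 (by positivity)
  have hj1 : (j : ℝ) + 1 = (⌈s / δ⌉₊ : ℝ) := by
    rw [hj]; push_cast [hceil1]; ring
  have hjlt : (j : ℝ) < s / δ := by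
    have := Nat.ceil_lt_add_one (le_of_lt (show (0:ℝ) < s / δ by positivity))
    rw [← hj1] at this
    linarith
  have hjge : s / δ ≤ (j : ℝ) + 1 := by rw [hj1]; exact Nat.le_ceil _
  have hjδ : (j : ℝ) * δ < s := (lt_div_iff₀ hδ).1 hjlt
  have hsjδ : s ≤ ((j : ℝ) + 1) * δ := (div_le_iff₀ hδ).1 hjge
  have hjJ : j ≤ J := by
    have hJge : 2 * γ / δ ≤ (J : ℝ) := by rw [hJ]; exact Nat.le_ceil _
    have h1 : (j : ℝ) < (J : ℝ) := by
      have h2 : s / δ < 2 * γ / δ := by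
        apply div_lt_div_of_pos_right hs2γ hδ
      linarith
    exact_mod_cast le_of_lt h1
  obtain ⟨m, n, hmn⟩ := h q j (le_trans (Nat.mul_le_mul_left c hjJ) (by omega))
  refine ⟨m, n, s - (j : ℝ) * δ, ?_, by linarith, by nlinarith⟩
  rw [hmn]; ring

/-- The arithmetic step in the proof of Lemma 4.1: if `α, β > 0` are
incommensurable (`α/β` irrational) and `ε > 0`, then every sufficiently large
real `t` can be written as `t = mα + nβ + ρ` with `m, n ∈ ℕ` and `0 < ρ < ε`. -/
theorem incommensurable_semigroup_dense_above
    (α β : ℝ) (hα : 0 < α) (hβ : 0 < β) (hirr : Irrational (α / β))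
    (ε : ℝ) (hε : 0 < ε) :
    ∃ T : ℝ, 0 < T ∧ ∀ t : ℝ, T ≤ t →
      ∃ m n : ℕ, ∃ ρ : ℝ, t = (m : ℝ) * α + (n : ℝ) * β + ρ ∧ 0 < ρ ∧ ρ < ε := by
  -- the subgroup generated by α and β is dense
  have hdense : Dense ((AddSubgroup.closure {α, β} : AddSubgroup ℝ) : Set ℝ) := by
    rcases (AddSubgroup.closure {α, β} : AddSubgroup ℝ).dense_or_cyclic with hd | ⟨a, ha⟩
    · exact hd
    · exfalso
      have hαG : α ∈ AddSubgroup.closure ({α, β} : Set ℝ) :=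
        AddSubgroup.subset_closure (by simp)
      have hβG : β ∈ AddSubgroup.closure ({α, β} : Set ℝ) :=
        AddSubgroup.subset_closure (by simp)
      rw [ha, AddSubgroup.mem_closure_singleton] at hαG hβG
      obtain ⟨p, hp⟩ := hαG
      obtain ⟨k, hk⟩ := hβG
      have hkz : k ≠ 0 := by
        rintro rfl; rw [zero_smul] at hk; linarith
      have hk0 : (k : ℝ) ≠ 0 := Int.cast_ne_zero.2 hkz
      apply hirr
      refine ⟨(p : ℚ) / (k : ℚ), ?_⟩
      have hβ' : (k : ℝ) * a = β := by rw [← hk, zsmul_eq_mul]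
      have hα' : (p : ℝ) * a = α := by rw [← hp, zsmul_eq_mul]
      have heq : α / β = (p : ℝ) / (k : ℝ) := by
        rw [← hα', ← hβ']
        rw [div_eq_div_iff (by rw [hβ']; exact ne_of_gt hβ) hk0]
        ring
      rw [heq]; push_cast; ring
  -- extract a small positive element of the subgroup
  have hε'0 : 0 < min ε (min α β) := lt_min hε (lt_min hα hβ)
  obtain ⟨g, hgG, hgI⟩ := hdense.exists_mem_open isOpen_Ioo
    (Set.nonempty_Ioo.2 hε'0)
  obtain ⟨hg0, hgε'⟩ := hgI
  rw [SetLike.mem_coe, AddSubgroup.mem_closure_pair] at hgG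
  obtain ⟨a, b, hab⟩ := hgG
  rw [zsmul_eq_mul, zsmul_eq_mul] at hab
  have hgε : g < ε := lt_of_lt_of_le hgε' (min_le_left _ _)
  have hgα : g < α := lt_of_lt_of_le hgε' (le_trans (min_le_right _ _) (min_le_left _ _))
  have hgβ : g < β := lt_of_lt_of_le hgε' (le_trans (min_le_right _ _) (min_le_right _ _))
  rcases le_or_gt a 0 with ha | ha
  · -- a ≤ 0, so b > 0; g = n*β - m*α with m = (-a).toNat, n = b.toNat
    have hb : 0 < b := by
      by_contra hb
      push_neg at hb
      have h1 : (a : ℝ) * α ≤ 0 :=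
        mul_nonpos_of_nonpos_of_nonneg (by exact_mod_cast ha) (le_of_lt hα)
      have h2 : (b : ℝ) * β ≤ 0 :=
        mul_nonpos_of_nonpos_of_nonneg (by exact_mod_cast hb) (le_of_lt hβ)
      linarith
    obtain ⟨m, hm⟩ : ∃ m : ℕ, (m : ℤ) = -a := ⟨(-a).toNat, Int.toNat_of_nonneg (by omega)⟩
    obtain ⟨n, hn⟩ : ∃ n : ℕ, (n : ℤ) = b := ⟨b.toNat, Int.toNat_of_nonneg (le_of_lt hb)⟩
    have hmr : (m : ℝ) = -(a : ℝ) := by exact_mod_cast congrArg (Int.cast : ℤ → ℝ) hm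
    have hnr : (n : ℝ) = (b : ℝ) := by exact_mod_cast congrArg (Int.cast : ℤ → ℝ) hn
    apply key_step α β α g ε hα hg0 hgα hgε m
    intro q j hqj
    refine ⟨q - j * m, j * n, ?_⟩
    have hcast : ((q - j * m : ℕ) : ℝ) = (q : ℝ) - (j : ℝ) * (m : ℝ) := by
      push_cast [Nat.cast_sub (by linarith [hqj] : j * m ≤ q)]; ring
    have hcast2 : ((j * n : ℕ) : ℝ) = (j : ℝ) * (n : ℝ) := by push_cast; ring
    rw [hcast, hcast2, hmr, hnr, ← hab]
    ring
  · -- a > 0; then b < 0; g = m*α - n*β with m = a.toNat, n = (-b).toNat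
    have hb : b < 0 := by
      by_contra hb
      push_neg at hb
      have h1 : (1 : ℝ) ≤ (a : ℝ) := by exact_mod_cast ha
      have h2 : (0 : ℝ) ≤ (b : ℝ) := by exact_mod_cast hb
      nlinarith
    obtain ⟨m, hm⟩ : ∃ m : ℕ, (m : ℤ) = a := ⟨a.toNat, Int.toNat_of_nonneg (le_of_lt ha)⟩
    obtain ⟨n, hn⟩ : ∃ n : ℕ, (n : ℤ) = -b := ⟨(-b).toNat, Int.toNat_of_nonneg (by omega)⟩
    have hmr : (m : ℝ) = (a : ℝ) := by exact_mod_cast congrArg (Int.cast : ℤ → ℝ) hm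
    have hnr : (n : ℝ) = -(b : ℝ) := by exact_mod_cast congrArg (Int.cast : ℤ → ℝ) hn
    apply key_step α β β g ε hβ hg0 hgβ hgε n
    intro q j hqj
    refine ⟨j * m, q - j * n, ?_⟩
    have hcast : ((q - j * n : ℕ) : ℝ) = (q : ℝ) - (j : ℝ) * (n : ℝ) := by
      push_cast [Nat.cast_sub (by linarith [hqj] : j * n ≤ q)]; ring
    have hcast2 : ((j * m : ℕ) : ℝ) = (j : ℝ) * (m : ℝ) := by push_cast; ring
    rw [hcast, hcast2, hmr, hnr, ← hab]
    ring
end
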